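/- arXiv:2409.18220 — 5 statements merged into one kernel-verified Lean document; each statement's English description precedes it below -/
import Mathlib

section
/- Let G be a finite simple graph and let H_1, …, H_k be pairwise vertex-disjoint induced subgraphs of G. Then the graph energy satisfies E(G) ≥ Σ_{i=1}^k E(H_i). -/
open Matrix

variable {V : Type*}

/-- The real adjacency matrix of a simple graph is Hermitian. -/
lemma adjMatrix_isHermitian [Fintype V] [DecidableEq V] (G : SimpleGraph V)
    [DecidableRel G.Adj] : (G.adjMatrix ℝ).IsHermitian := by
  rw [Matrix.IsHermitian, Matrix.conjTranspose_eq_transpose_of_trivial]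
  exact G.isSymm_adjMatrix

/-- The eigenvalues of the adjacency matrix of `G`, as a function indexed by the vertices. -/
noncomputable def adjEigenvalues [Fintype V] [DecidableEq V] (G : SimpleGraph V) : V → ℝ :=
  letI := Classical.decRel G.Adj
  (adjMatrix_isHermitian G).eigenvalues

/-- The energy of a graph: the sum of the absolute values of its eigenvalues. -/
noncomputable def graphEnergy [Fintype V] [DecidableEq V] (G : SimpleGraph V) : ℝ :=
  ∑ i, |adjEigenvalues G i|

/-- The positive square energy `s⁺(G)`: the sum of squares of the positive eigenvalues. -/
noncomputable def sPlus [Fintype V] [DecidableEq V] (G : SimpleGraph V) : ℝ :=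
  ∑ i, if 0 < adjEigenvalues G i then (adjEigenvalues G i) ^ 2 else 0

/-- The negative square energy `s⁻(G)`: the sum of squares of the negative eigenvalues. -/
noncomputable def sMinus [Fintype V] [DecidableEq V] (G : SimpleGraph V) : ℝ :=
  ∑ i, if adjEigenvalues G i < 0 then (adjEigenvalues G i) ^ 2 else 0

/-- The largest adjacency eigenvalue `λ₁(G)` (for a graph with a nonempty vertex set). -/
noncomputable def maxEig [Fintype V] [DecidableEq V] (G : SimpleGraph V) : ℝ :=
  ⨆ i, adjEigenvalues G i

/-- The smallest adjacency eigenvalue `λₙ(G)` (for a graph with a nonempty vertex set). -/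
noncomputable def minEig [Fintype V] [DecidableEq V] (G : SimpleGraph V) : ℝ :=
  ⨅ i, adjEigenvalues G i

/-! ### Auxiliary matrix lemmas -/

section MatrixLemmas
variable {n : Type*} [Fintype n] [DecidableEq n]

lemma aux_real_mul_sign (x : ℝ) : x * Real.sign x = |x| := by
  rcases lt_trichotomy x 0 with h | h | h
  · rw [Real.sign_of_neg h, abs_of_neg h]; ring
  · simp [h]
  · rw [Real.sign_of_pos h, abs_of_pos h]; ring

lemma aux_abs_sign_le (x : ℝ) : |Real.sign x| ≤ 1 := by
  rcases Real.sign_apply_eq x with h | h | h <;> rw [h] <;> norm_num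

/-- The "sign matrix" of a Hermitian real matrix. -/
noncomputable def sgnMat {A : Matrix n n ℝ} (hA : A.IsHermitian) : Matrix n n ℝ :=
  (hA.eigenvectorUnitary : Matrix n n ℝ) *
    diagonal (fun i => Real.sign (hA.eigenvalues i)) *
    star (hA.eigenvectorUnitary : Matrix n n ℝ)

lemma trace_mul_sgnMat {A : Matrix n n ℝ} (hA : A.IsHermitian) :
    trace (A * sgnMat hA) = ∑ i, |hA.eigenvalues i| := by
  set U : Matrix n n ℝ := (hA.eigenvectorUnitary : Matrix n n ℝ) with hU
  set S : Matrix n n ℝ := diagonal (fun i => Real.sign (hA.eigenvalues i)) with hS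
  have : trace (A * sgnMat hA) = trace ((star U * A * U) * S) := by
    rw [sgnMat, ← hU, ← hS, show A * (U * S * star U) = A * (U * S) * star U by
      noncomm_ring, trace_mul_cycle]
    noncomm_ring
  rw [this, (show star (hA.eigenvectorUnitary : Matrix n n ℝ) * A * (hA.eigenvectorUnitary : Matrix n n ℝ) = diagonal (RCLike.ofReal ∘ hA.eigenvalues) by
      simpa [Unitary.conjStarAlgAut_apply] using hA.conjStarAlgAut_star_eigenvectorUnitary), hS]
  have : (RCLike.ofReal : ℝ → ℝ) ∘ hA.eigenvalues = hA.eigenvalues := rfl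
  rw [this, diagonal_mul_diagonal, trace_diagonal]
  simp [aux_real_mul_sign]

lemma quad_sgnMat {A : Matrix n n ℝ} (hA : A.IsHermitian) (x : n → ℝ) :
    |x ⬝ᵥ sgnMat hA *ᵥ x| ≤ x ⬝ᵥ x := by
  set U : Matrix n n ℝ := (hA.eigenvectorUnitary : Matrix n n ℝ) with hU
  have h2 : U * star U = 1 := (Matrix.mem_unitaryGroup_iff).mp hA.eigenvectorUnitary.2
  set y : n → ℝ := star U *ᵥ x with hy
  have hxU : x ᵥ* U = y := by
    ext j
    simp [hy, vecMul, mulVec, dotProduct, star, conjTranspose, transpose, mul_comm]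
  have hq : x ⬝ᵥ sgnMat hA *ᵥ x = ∑ j, Real.sign (hA.eigenvalues j) * (y j)^2 := by
    rw [sgnMat, ← hU, ← mulVec_mulVec, ← mulVec_mulVec, dotProduct_mulVec, hxU, ← hy]
    simp only [dotProduct, mulVec_diagonal, sq]
    exact Finset.sum_congr rfl fun j _ => by ring
  have hUy : U *ᵥ y = x := by rw [hy, mulVec_mulVec, h2, one_mulVec]
  have hyy : y ⬝ᵥ y = x ⬝ᵥ x := by
    calc y ⬝ᵥ y = (x ᵥ* U) ⬝ᵥ y := by rw [hxU]
      _ = x ⬝ᵥ (U *ᵥ y) := (dotProduct_mulVec _ _ _).symm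
      _ = x ⬝ᵥ x := by rw [hUy]
  calc |x ⬝ᵥ sgnMat hA *ᵥ x| = |∑ j, Real.sign (hA.eigenvalues j) * (y j)^2| := by rw [hq]
    _ ≤ ∑ j, |Real.sign (hA.eigenvalues j) * (y j)^2| := Finset.abs_sum_le_sum_abs _ _
    _ ≤ ∑ j, (y j)^2 := by
        refine Finset.sum_le_sum fun j _ => ?_
        rw [abs_mul]
        nlinarith [aux_abs_sign_le (hA.eigenvalues j),
          abs_nonneg (Real.sign (hA.eigenvalues j)),
          sq_nonneg (y j), abs_of_nonneg (sq_nonneg (y j))]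
    _ = y ⬝ᵥ y := by simp [dotProduct, sq]
    _ = x ⬝ᵥ x := hyy

lemma trace_mul_le_sum_abs_eigenvalues {A B : Matrix n n ℝ} (hA : A.IsHermitian)
    (hB : ∀ x : n → ℝ, |x ⬝ᵥ B *ᵥ x| ≤ x ⬝ᵥ x) :
    trace (A * B) ≤ ∑ i, |hA.eigenvalues i| := by
  set U : Matrix n n ℝ := (hA.eigenvectorUnitary : Matrix n n ℝ) with hU
  have h1 : star U * U = 1 := (Matrix.mem_unitaryGroup_iff').mp hA.eigenvectorUnitary.2
  have h2 : U * star U = 1 := (Matrix.mem_unitaryGroup_iff).mp hA.eigenvectorUnitary.2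
  have hC : ∀ i, (star U * B * U) i i = (fun j => U j i) ⬝ᵥ B *ᵥ (fun j => U j i) := by
    intro i
    simp only [mul_apply, dotProduct, mulVec, star_apply, star_trivial,
      Finset.sum_mul, Finset.mul_sum]
    rw [Finset.sum_comm]
    exact Finset.sum_congr rfl fun j _ => Finset.sum_congr rfl fun k _ => by ring
  have key : trace (A * B)
      = ∑ i, hA.eigenvalues i * ((fun j => U j i) ⬝ᵥ B *ᵥ (fun j => U j i)) := by
    have e0 : trace (A * B) = trace ((star U * A * U) * (star U * B * U)) := by
      rw [show (star U * A * U) * (star U * B * U) = star U * (A * (U * star U) * B) * U by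
        noncomm_ring, h2, mul_one, trace_mul_cycle, h2, one_mul]
    rw [e0, (show star (hA.eigenvectorUnitary : Matrix n n ℝ) * A * (hA.eigenvectorUnitary : Matrix n n ℝ) = diagonal (RCLike.ofReal ∘ hA.eigenvalues) by
      simpa [Unitary.conjStarAlgAut_apply] using hA.conjStarAlgAut_star_eigenvectorUnitary),
      show (RCLike.ofReal : ℝ → ℝ) ∘ hA.eigenvalues = hA.eigenvalues from rfl, trace]
    refine Finset.sum_congr rfl fun i _ => ?_
    rw [diag_apply, diagonal_mul, hC]
  have hcol : ∀ i, (fun j => U j i) ⬝ᵥ (fun j => U j i) = 1 := by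
    intro i
    have := congrFun (congrFun h1 i) i
    simpa [mul_apply, one_apply, dotProduct, star_apply] using this
  rw [key]
  refine Finset.sum_le_sum fun i _ => ?_
  calc hA.eigenvalues i * ((fun j => U j i) ⬝ᵥ B *ᵥ (fun j => U j i))
      ≤ |hA.eigenvalues i * ((fun j => U j i) ⬝ᵥ B *ᵥ (fun j => U j i))| := le_abs_self _
    _ = |hA.eigenvalues i| * |(fun j => U j i) ⬝ᵥ B *ᵥ (fun j => U j i)| := abs_mul _ _
    _ ≤ |hA.eigenvalues i| * 1 := by
        refine mul_le_mul_of_nonneg_left ?_ (abs_nonneg _)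
        calc |(fun j => U j i) ⬝ᵥ B *ᵥ (fun j => U j i)|
            ≤ (fun j => U j i) ⬝ᵥ (fun j => U j i) := hB _
          _ = 1 := hcol i
    _ = |hA.eigenvalues i| := mul_one _

end MatrixLemmas

/-! ### Summation helpers -/

section Helpers
variable [Fintype V] [DecidableEq V]

lemma sum_dite_mem (s : Finset V) [Fintype (↑s : Set V)] (g : (↑s : Set V) → ℝ) :
    ∑ v : V, (if h : v ∈ s then g ⟨v, h⟩ else 0) = ∑ v : (↑s : Set V), g v := by
  rw [← Finset.sum_subset s.subset_univ (fun x _ hx => dif_neg hx)]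
  rw [Finset.sum_subtype s (fun x => Finset.mem_coe.symm)
    (fun v => if h : v ∈ s then g ⟨v, h⟩ else 0)]
  exact Finset.sum_congr rfl fun v _ => dif_pos (Finset.mem_coe.mp v.2)

lemma sum_sum_embed (s : Finset V) [Fintype (↑s : Set V)]
    (N : Matrix (↑s : Set V) (↑s : Set V) ℝ) (g : V → V → ℝ) :
    ∑ u : V, ∑ v : V, g u v *
      (if hu : u ∈ s then (if hv : v ∈ s then N ⟨u, hu⟩ ⟨v, hv⟩ else 0) else 0)
    = ∑ u : (↑s : Set V), ∑ v : (↑s : Set V), g ↑u ↑v * N u v := by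
  have h1 : ∀ u : V, (∑ v : V, g u v *
      (if hu : u ∈ s then (if hv : v ∈ s then N ⟨u, hu⟩ ⟨v, hv⟩ else 0) else 0))
      = (if hu : u ∈ s then ∑ v : (↑s : Set V), g u ↑v * N ⟨u, hu⟩ v else 0) := by
    intro u
    by_cases hu : u ∈ s
    · rw [dif_pos hu, ← sum_dite_mem s (fun v => g u ↑v * N ⟨u, hu⟩ v)]
      refine Finset.sum_congr rfl fun v _ => ?_
      rw [dif_pos hu, mul_dite, mul_zero]
    · simp only [dif_neg hu, mul_zero, Finset.sum_const_zero]
  rw [Finset.sum_congr rfl fun u _ => h1 u]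
  exact sum_dite_mem s (fun u => ∑ v : (↑s : Set V), g ↑u ↑v * N u v)

end Helpers

/-- If `H₁, …, H_k` are pairwise vertex-disjoint induced subgraphs of `G`,
then `E(G) ≥ ∑ᵢ E(Hᵢ)`. -/
theorem energy_ge_sum_energy_induced {V : Type*} [Fintype V] [DecidableEq V]
    (G : SimpleGraph V) (k : ℕ) (f : Fin k → Finset V)
    (hdisj : ∀ i j : Fin k, i ≠ j → Disjoint (f i) (f j)) :
    graphEnergy G ≥ ∑ i : Fin k, graphEnergy (G.induce (↑(f i) : Set V)) := by
  letI instG : DecidableRel G.Adj := Classical.decRel G.Adj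
  set A : Matrix V V ℝ := G.adjMatrix ℝ with hAdef
  have hA : A.IsHermitian := adjMatrix_isHermitian G
  have hEG : graphEnergy G = ∑ i, |hA.eigenvalues i| := rfl
  -- matrices of the induced subgraphs
  letI instI : ∀ i : Fin k, DecidableRel (G.induce (↑(f i) : Set V)).Adj :=
    fun i => Classical.decRel _
  set M : ∀ i : Fin k, Matrix (↑(f i) : Set V) (↑(f i) : Set V) ℝ :=
    fun i => (G.induce (↑(f i) : Set V)).adjMatrix ℝ with hMdef
  have hM : ∀ i, (M i).IsHermitian := fun i => adjMatrix_isHermitian _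
  have hEH : ∀ i : Fin k, graphEnergy (G.induce (↑(f i) : Set V)) =
      ∑ v, |(hM i).eigenvalues v| := fun i => rfl
  have hsub : ∀ (i : Fin k) (a b : (↑(f i) : Set V)), M i a b = A ↑a ↑b := by
    intro i a b
    rw [hMdef, hAdef]
    by_cases h : G.Adj ↑a ↑b <;>
      simp [SimpleGraph.adjMatrix_apply, Function.Embedding.coe_subtype, h] <;>
      exact h
  -- the big test matrix B
  set B : Matrix V V ℝ := fun u v => ∑ i : Fin k,
      (if hu : u ∈ f i then (if hv : v ∈ f i then sgnMat (hM i) ⟨u, hu⟩ ⟨v, hv⟩ else 0) else 0)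
    with hBdef
  -- trace identity
  have htrace : trace (A * B) = ∑ i : Fin k, trace (M i * sgnMat (hM i)) := by
    have expand : trace (A * B) = ∑ u : V, ∑ v : V, A u v * B v u := by
      rw [trace]
      refine Finset.sum_congr rfl fun u _ => ?_
      simp [mul_apply]
    rw [expand]
    have swap1 : ∑ u : V, ∑ v : V, A u v * B v u
        = ∑ i : Fin k, ∑ v : V, ∑ u : V, A u v *
          (if hv : v ∈ f i then (if hu : u ∈ f i then sgnMat (hM i) ⟨v, hv⟩ ⟨u, hu⟩ else 0)
            else 0) := by
      rw [show (∑ u : V, ∑ v : V, A u v * B v u)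
          = ∑ u : V, ∑ v : V, ∑ i : Fin k, A u v *
            (if hv : v ∈ f i then (if hu : u ∈ f i then sgnMat (hM i) ⟨v, hv⟩ ⟨u, hu⟩ else 0)
              else 0) from
        Finset.sum_congr rfl fun u _ => Finset.sum_congr rfl fun v _ => by
          rw [hBdef]; exact Finset.mul_sum _ _ _]
      exact Finset.sum_comm.trans
        ((Finset.sum_congr rfl fun v _ => Finset.sum_comm).trans Finset.sum_comm)
    rw [swap1]
    refine Finset.sum_congr rfl fun i _ => ?_
    rw [show (∑ v : V, ∑ u : V, A u v *
        (if hv : v ∈ f i then (if hu : u ∈ f i then sgnMat (hM i) ⟨v, hv⟩ ⟨u, hu⟩ else 0)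
          else 0))
        = ∑ v : (↑(f i) : Set V), ∑ u : (↑(f i) : Set V),
            A ↑u ↑v * sgnMat (hM i) v u from
      sum_sum_embed (f i) (sgnMat (hM i)) (fun v u => A u v)]
    rw [trace]
    refine Finset.sum_comm.trans (Finset.sum_congr rfl fun u _ => ?_)
    rw [diag_apply, mul_apply]
    exact Finset.sum_congr rfl fun v _ => by rw [hsub i u v]
  -- quadratic form bound for B
  have hBquad : ∀ x : V → ℝ, |x ⬝ᵥ B *ᵥ x| ≤ x ⬝ᵥ x := by
    intro x
    have expand : x ⬝ᵥ B *ᵥ x = ∑ i : Fin k,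
        (fun a : (↑(f i) : Set V) => x ↑a) ⬝ᵥ sgnMat (hM i) *ᵥ (fun a => x ↑a) := by
      have e1 : x ⬝ᵥ B *ᵥ x = ∑ u : V, ∑ v : V, (x u * x v) * B u v := by
        simp only [dotProduct, mulVec]
        refine Finset.sum_congr rfl fun u _ => ?_
        rw [Finset.mul_sum]
        exact Finset.sum_congr rfl fun v _ => by ring
      rw [e1]
      rw [show (∑ u : V, ∑ v : V, (x u * x v) * B u v)
          = ∑ u : V, ∑ v : V, ∑ i : Fin k, (x u * x v) *
            (if hu : u ∈ f i then (if hv : v ∈ f i then sgnMat (hM i) ⟨u, hu⟩ ⟨v, hv⟩ else 0)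
              else 0) from
        Finset.sum_congr rfl fun u _ => Finset.sum_congr rfl fun v _ => by
          rw [hBdef]; exact Finset.mul_sum _ _ _]
      rw [show (∑ u : V, ∑ v : V, ∑ i : Fin k, (x u * x v) *
            (if hu : u ∈ f i then (if hv : v ∈ f i then sgnMat (hM i) ⟨u, hu⟩ ⟨v, hv⟩ else 0)
              else 0))
          = ∑ i : Fin k, ∑ u : V, ∑ v : V, (x u * x v) *
            (if hu : u ∈ f i then (if hv : v ∈ f i then sgnMat (hM i) ⟨u, hu⟩ ⟨v, hv⟩ else 0)
              else 0) from by
        exact (Finset.sum_congr rfl fun u _ => Finset.sum_comm).trans Finset.sum_comm]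
      refine Finset.sum_congr rfl fun i _ => ?_
      rw [sum_sum_embed (f i) (sgnMat (hM i)) (fun u v => x u * x v)]
      simp only [dotProduct, mulVec]
      refine Finset.sum_congr rfl fun u _ => ?_
      rw [Finset.mul_sum]
      exact Finset.sum_congr rfl fun v _ => by ring
    rw [expand]
    calc |∑ i : Fin k, (fun a : (↑(f i) : Set V) => x ↑a) ⬝ᵥ sgnMat (hM i) *ᵥ (fun a => x ↑a)|
        ≤ ∑ i : Fin k, |(fun a : (↑(f i) : Set V) => x ↑a) ⬝ᵥ sgnMat (hM i) *ᵥ (fun a => x ↑a)| :=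
          Finset.abs_sum_le_sum_abs _ _
      _ ≤ ∑ i : Fin k, (fun a : (↑(f i) : Set V) => x ↑a) ⬝ᵥ (fun a => x ↑a) :=
          Finset.sum_le_sum fun i _ => quad_sgnMat (hM i) _
      _ = ∑ i : Fin k, ∑ v ∈ f i, x v * x v := by
          refine Finset.sum_congr rfl fun i _ => ?_
          rw [dotProduct]
          exact (Finset.sum_subtype (f i) (fun x => Finset.mem_coe.symm)
            (fun v => x v * x v)).symm
      _ = ∑ v ∈ Finset.univ.biUnion f, x v * x v := by
          rw [Finset.sum_biUnion]
          intro i _ j _ hij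
          exact hdisj i j hij
      _ ≤ ∑ v : V, x v * x v := by
          refine Finset.sum_le_sum_of_subset_of_nonneg (Finset.subset_univ _) ?_
          intro v _ _
          exact mul_self_nonneg _
      _ = x ⬝ᵥ x := rfl
  -- put it together
  rw [ge_iff_le, hEG]
  calc ∑ i : Fin k, graphEnergy (G.induce (↑(f i) : Set V))
      = ∑ i : Fin k, trace (M i * sgnMat (hM i)) := by
        refine Finset.sum_congr rfl fun i _ => ?_
        rw [hEH i, ← trace_mul_sgnMat (hM i)]
    _ = trace (A * B) := htrace.symm
    _ ≤ ∑ i, |hA.eigenvalues i| := trace_mul_le_sum_abs_eigenvalues hA hBquad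
end

section
/- Let G be a finite simple graph and let H_1, …, H_k be pairwise vertex-disjoint induced subgraphs of G. Then s^-(G) ≥ Σ_{i=1}^k s^-(H_i). -/
open Matrix

section FrobAux
set_option linter.unusedSectionVars false
variable {n : Type*} [Fintype n] [DecidableEq n]

noncomputable def frob (M : Matrix n n ℝ) : ℝ := ∑ i, ∑ j, (M i j)^2

lemma frob_eq_trace (M : Matrix n n ℝ) : frob M = Matrix.trace (Mᴴ * M) := by
  simp only [frob, Matrix.trace, Matrix.diag, Matrix.mul_apply, Matrix.conjTranspose_apply,
    star_trivial, sq]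
  exact Finset.sum_comm

lemma frob_conj (M U : Matrix n n ℝ) (hU : U ∈ Matrix.unitaryGroup n ℝ) :
    frob (star U * M * U) = frob M := by
  have h1 : star U * U = 1 := (Unitary.mem_iff.mp hU).1
  have h2 : U * star U = 1 := (Unitary.mem_iff.mp hU).2
  rw [frob_eq_trace, frob_eq_trace]
  have key : (star U * M * U)ᴴ * (star U * M * U) = star U * (Mᴴ * M) * U := by
    have hs : (star U)ᴴ = U := by
      rw [← star_eq_conjTranspose, star_star]
    rw [star_eq_conjTranspose]
    simp only [conjTranspose_mul, hs, conjTranspose_conjTranspose, mul_assoc]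
    rw [show U * (Uᴴ * (M * U)) = (U * star U) * (M * U) by rw [star_eq_conjTranspose]; noncomm_ring,
      h2, one_mul]
  rw [key, Matrix.trace_mul_cycle, ← mul_assoc, h2, one_mul]

lemma diag_sq_le_frob (M : Matrix n n ℝ) : ∑ i, (M i i)^2 ≤ frob M := by
  refine Finset.sum_le_sum fun i _ => ?_
  exact Finset.single_le_sum (fun j _ => sq_nonneg (M i j)) (Finset.mem_univ i)

lemma psd_diag_nonneg {M : Matrix n n ℝ} (hM : M.PosSemidef) (i : n) : 0 ≤ M i i := by
  exact hM.diag_nonneg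

lemma frob_diagonal (d : n → ℝ) : frob (diagonal d) = ∑ i, d i ^ 2 := by
  unfold frob
  refine Finset.sum_congr rfl fun i _ => ?_
  simp [Matrix.diagonal_apply, apply_ite (· ^ 2)]

lemma diag_conj_eq (A : Matrix n n ℝ) (hA : A.IsHermitian) :
    star (hA.eigenvectorUnitary : Matrix n n ℝ) * A * (hA.eigenvectorUnitary : Matrix n n ℝ)
      = diagonal hA.eigenvalues := by
  rw [show star (hA.eigenvectorUnitary : Matrix n n ℝ) * A * (hA.eigenvectorUnitary : Matrix n n ℝ)
      = diagonal (RCLike.ofReal ∘ hA.eigenvalues) by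
      simpa using hA.conjStarAlgAut_star_eigenvectorUnitary,
    show (RCLike.ofReal ∘ hA.eigenvalues : n → ℝ) = hA.eigenvalues from
      funext fun i => by simp [RCLike.ofReal_real_eq_id]]

lemma sminus_le_frob (A C : Matrix n n ℝ) (hA : A.IsHermitian) (hC : C.PosSemidef) :
    ∑ i, (if hA.eigenvalues i < 0 then hA.eigenvalues i ^ 2 else 0) ≤ frob (A - C) := by
  set U : Matrix n n ℝ := (hA.eigenvectorUnitary : Matrix n n ℝ) with hUdef
  have hUmem : U ∈ Matrix.unitaryGroup n ℝ := hA.eigenvectorUnitary.2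
  set M : Matrix n n ℝ := star U * (A - C) * U with hMdef
  have hM : M = diagonal hA.eigenvalues - star U * C * U := by
    rw [hMdef, Matrix.mul_sub, Matrix.sub_mul, diag_conj_eq A hA]
  have hCU : (star U * C * U).PosSemidef := by
    have := hC.conjTranspose_mul_mul_same U
    rwa [← star_eq_conjTranspose] at this
  have hfr : frob (A - C) = frob M := (frob_conj _ U hUmem).symm
  rw [hfr]
  calc ∑ i, (if hA.eigenvalues i < 0 then hA.eigenvalues i ^ 2 else 0)
      ≤ ∑ i, (M i i) ^ 2 := by
        refine Finset.sum_le_sum fun i _ => ?_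
        have hc : 0 ≤ (star U * C * U) i i := psd_diag_nonneg hCU i
        have hMi : M i i = hA.eigenvalues i - (star U * C * U) i i := by
          rw [hM]; simp [Matrix.diagonal_apply]
        rw [hMi]
        split_ifs with h
        · nlinarith
        · positivity
    _ ≤ frob M := diag_sq_le_frob M

lemma exists_psd_frob (A : Matrix n n ℝ) (hA : A.IsHermitian) :
    ∃ C : Matrix n n ℝ, C.PosSemidef ∧
      frob (A - C) = ∑ i, (if hA.eigenvalues i < 0 then hA.eigenvalues i ^ 2 else 0) := by
  set U : Matrix n n ℝ := (hA.eigenvectorUnitary : Matrix n n ℝ) with hUdef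
  have hUmem : U ∈ Matrix.unitaryGroup n ℝ := hA.eigenvectorUnitary.2
  have h1 : star U * U = 1 := (Unitary.mem_iff.mp hUmem).1
  have h2 : U * star U = 1 := (Unitary.mem_iff.mp hUmem).2
  refine ⟨U * diagonal (fun i => max (hA.eigenvalues i) 0) * star U, ?_, ?_⟩
  · have hd : (diagonal (fun i => max (hA.eigenvalues i) 0)).PosSemidef :=
      Matrix.PosSemidef.diagonal (fun i => le_max_right _ _)
    have := hd.mul_mul_conjTranspose_same U
    rwa [← star_eq_conjTranspose] at this
  · have key : star U * (A - U * diagonal (fun i => max (hA.eigenvalues i) 0) * star U) * U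
        = diagonal (fun i => min (hA.eigenvalues i) 0) := by
      rw [Matrix.mul_sub, Matrix.sub_mul, diag_conj_eq A hA,
        show star U * (U * diagonal (fun i => max (hA.eigenvalues i) 0) * star U) * U
            = (star U * U) * diagonal (fun i => max (hA.eigenvalues i) 0) * (star U * U) by
          noncomm_ring,
        h1, one_mul, mul_one, Matrix.diagonal_sub]
      rw [show (fun i => hA.eigenvalues i - max (hA.eigenvalues i) 0)
          = fun i => min (hA.eigenvalues i) 0 from funext fun i => by
        rcases le_or_gt (hA.eigenvalues i) 0 with h | h
        · rw [max_eq_right h, min_eq_left h, sub_zero]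
        · rw [max_eq_left h.le, min_eq_right h.le, sub_self]]
    have := frob_conj (A - U * diagonal (fun i => max (hA.eigenvalues i) 0) * star U) U hUmem
    rw [key, frob_diagonal] at this
    rw [← this]
    congr 1
    ext i
    rcases lt_or_ge (hA.eigenvalues i) 0 with h | h
    · simp [min_eq_left h.le, h]
    · simp [min_eq_right h, not_lt.mpr h]

lemma sum_subtype_coe (s : Finset n) (F : n → ℝ) :
    ∑ a : (↑s : Set n), F ↑a = ∑ a ∈ s, F a := by
  rw [Finset.sum_subtype s (fun x => Finset.mem_coe.symm) F]

end FrobAux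


variable {V : Type*}

/-- If `H₁, …, H_k` are pairwise vertex-disjoint induced subgraphs of `G`,
then `s⁻(G) ≥ ∑ᵢ s⁻(Hᵢ)`. -/
theorem sMinus_ge_sum_sMinus_induced {V : Type*} [Fintype V] [DecidableEq V]
    (G : SimpleGraph V) (k : ℕ) (f : Fin k → Finset V)
    (hdisj : ∀ i j : Fin k, i ≠ j → Disjoint (f i) (f j)) :
    sMinus G ≥ ∑ i : Fin k, sMinus (G.induce (↑(f i) : Set V)) := by
  classical
  letI instG := Classical.decRel G.Adj
  set A : Matrix V V ℝ := G.adjMatrix ℝ with hAdef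
  have hA : A.IsHermitian := adjMatrix_isHermitian G
  have hsG : sMinus G = ∑ i, (if hA.eigenvalues i < 0 then hA.eigenvalues i ^ 2 else 0) := rfl
  obtain ⟨C, hC, hfrC⟩ := exists_psd_frob A hA
  -- the per-part bound
  have hpart : ∀ i : Fin k, sMinus (G.induce (↑(f i) : Set V))
      ≤ ∑ p ∈ (f i) ×ˢ (f i), ((A - C) p.1 p.2) ^ 2 := by
    intro i
    letI instH := Classical.decRel (G.induce (↑(f i) : Set V)).Adj
    set B : Matrix (↑(f i) : Set V) (↑(f i) : Set V) ℝ :=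
      (G.induce (↑(f i) : Set V)).adjMatrix ℝ with hBdef
    have hB : B.IsHermitian := adjMatrix_isHermitian _
    have hsH : sMinus (G.induce (↑(f i) : Set V))
        = ∑ a, (if hB.eigenvalues a < 0 then hB.eigenvalues a ^ 2 else 0) := rfl
    have hBsub : B = A.submatrix (Subtype.val) (Subtype.val) := by
      ext a b
      simp only [hBdef, hAdef, SimpleGraph.adjMatrix_apply, Matrix.submatrix_apply,
        SimpleGraph.comap_adj, Function.Embedding.coe_subtype, SimpleGraph.induce_adj]
    have hCsub : (C.submatrix (Subtype.val : (↑(f i) : Set V) → V) Subtype.val).PosSemidef :=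
      hC.submatrix _
    have hle := sminus_le_frob B (C.submatrix Subtype.val Subtype.val) hB hCsub
    have hsub : B - C.submatrix Subtype.val Subtype.val
        = (A - C).submatrix (Subtype.val : (↑(f i) : Set V) → V) Subtype.val := by
      ext a b
      simp [hBsub, Matrix.sub_apply]
    rw [hsub] at hle
    have hfr : frob ((A - C).submatrix (Subtype.val : (↑(f i) : Set V) → V) Subtype.val)
        = ∑ p ∈ (f i) ×ˢ (f i), ((A - C) p.1 p.2) ^ 2 := by
      rw [Finset.sum_product, frob]
      rw [← sum_subtype_coe (f i) (fun a => ∑ b ∈ f i, ((A - C) a b) ^ 2)]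
      refine Finset.sum_congr rfl fun a _ => ?_
      rw [← sum_subtype_coe (f i) (fun b => ((A - C) ↑a b) ^ 2)]
      rfl
    rw [hsH]
    calc _ ≤ _ := hle
      _ = _ := hfr
  -- sum over parts
  have hsum : ∑ i : Fin k, ∑ p ∈ (f i) ×ˢ (f i), ((A - C) p.1 p.2) ^ 2
      ≤ frob (A - C) := by
    have hdisj' : (↑(Finset.univ : Finset (Fin k)) : Set (Fin k)).PairwiseDisjoint
        (fun i => (f i) ×ˢ (f i)) := by
      intro i _ j _ hij
      refine Finset.disjoint_left.mpr fun p hp hq => ?_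
      rw [Finset.mem_product] at hp hq
      exact Finset.disjoint_left.mp (hdisj i j hij) hp.1 hq.1
    rw [← Finset.sum_biUnion hdisj']
    have : frob (A - C) = ∑ p : V × V, ((A - C) p.1 p.2) ^ 2 := by
      rw [frob, Fintype.sum_prod_type]
    rw [this]
    refine Finset.sum_le_sum_of_subset_of_nonneg (Finset.subset_univ _) fun p _ _ => sq_nonneg _
  calc sMinus G = frob (A - C) := by rw [hsG, hfrC]
    _ ≥ ∑ i : Fin k, sMinus (G.induce (↑(f i) : Set V)) :=
      le_trans (Finset.sum_le_sum fun i _ => hpart i) hsum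
end

section
/- Let G be a finite simple graph and let H be an induced subgraph of G. Then s^+(G) ≥ s^+(H). -/
open Matrix

variable {V : Type*}

section Aux

variable {n : Type*} [Fintype n] [DecidableEq n]

lemma psd_trace_nonneg {A : Matrix n n ℝ} (hA : A.PosSemidef) : 0 ≤ A.trace := by
  rw [Matrix.trace]
  exact Finset.sum_nonneg fun i _ => by simpa using hA.2 (Finsupp.single i 1)

lemma trace_mul_nonneg {A B : Matrix n n ℝ} (hA : A.PosSemidef) (hB : B.PosSemidef) :
    0 ≤ (A * B).trace := by
  obtain ⟨C, rfl⟩ := (by open MatrixOrder in exact CStarAlgebra.nonneg_iff_eq_star_mul_self.mp hA.nonneg)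
  rw [Matrix.mul_assoc, Matrix.trace_mul_comm]
  exact psd_trace_nonneg (hB.mul_mul_conjTranspose_same C)

section spec
variable {A : Matrix n n ℝ} (hA : A.IsHermitian)

noncomputable def conjD (hA : A.IsHermitian) (f : ℝ → ℝ) : Matrix n n ℝ :=
  (hA.eigenvectorUnitary : Matrix n n ℝ) * diagonal (f ∘ hA.eigenvalues) *
    star (hA.eigenvectorUnitary : Matrix n n ℝ)

lemma conjD_mul (f g : ℝ → ℝ) :
    conjD hA f * conjD hA g = conjD hA (fun x => f x * g x) := by
  unfold conjD
  rw [Matrix.mul_assoc, Matrix.mul_assoc, ← Matrix.mul_assoc (star _),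
    ← Matrix.mul_assoc (star _), (Matrix.mem_unitaryGroup_iff').mp (hA.eigenvectorUnitary).2,
    Matrix.one_mul, ← Matrix.mul_assoc (diagonal (f ∘ hA.eigenvalues)), diagonal_mul_diagonal,
    ← Matrix.mul_assoc]
  rfl

lemma conjD_trace (f : ℝ → ℝ) : (conjD hA f).trace = ∑ i, f (hA.eigenvalues i) := by
  unfold conjD
  rw [Matrix.trace_mul_comm, ← Matrix.mul_assoc,
    (Matrix.mem_unitaryGroup_iff').mp (hA.eigenvectorUnitary).2, Matrix.one_mul, trace_diagonal]
  rfl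

lemma conjD_psd {f : ℝ → ℝ} (hf : ∀ x, 0 ≤ f x) : (conjD hA f).PosSemidef := by
  unfold conjD
  rw [Matrix.star_eq_conjTranspose]
  exact (PosSemidef.diagonal (fun i => hf _)).mul_mul_conjTranspose_same _

lemma conjD_one : conjD hA (fun _ => 1) = 1 := by
  unfold conjD
  have : (diagonal ((fun (_ : ℝ) => (1:ℝ)) ∘ hA.eigenvalues)) = (1 : Matrix n n ℝ) := by
    have h : ((fun (_ : ℝ) => (1:ℝ)) ∘ hA.eigenvalues) = fun _ => (1:ℝ) := rfl
    rw [h, diagonal_one]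
  rw [this, Matrix.mul_one, (Matrix.mem_unitaryGroup_iff).mp (hA.eigenvectorUnitary).2]

lemma conjD_id : conjD hA id = A := by
  have := hA.spectral_theorem
  rw [Unitary.conjStarAlgAut_apply] at this
  unfold conjD
  exact this.symm

end spec

lemma trace_sq_mono {X Z : Matrix n n ℝ} (hX : X.PosSemidef) (hZ : Z.PosSemidef)
    (hle : (X - Z).PosSemidef) : (Z * Z).trace ≤ (X * X).trace := by
  have h1 : 0 ≤ ((X - Z) * X).trace := trace_mul_nonneg hle hX
  have h2 : 0 ≤ (Z * (X - Z)).trace := trace_mul_nonneg hZ hle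
  have e : (X - Z) * X + Z * (X - Z) = X * X - Z * Z := by noncomm_ring
  have := congrArg Matrix.trace e
  rw [Matrix.trace_add, Matrix.trace_sub] at this
  linarith

set_option maxHeartbeats 1000000 in
/-- Key inequality: if `A ⪯ Q` with `Q` PSD, then the positive square energy of `A`
is at most `tr(Q²)`. -/
lemma key_ineq {A Q : Matrix n n ℝ} (hA : A.IsHermitian) (hQ : Q.PosSemidef)
    (hle : (Q - A).PosSemidef) :
    (∑ i, if 0 < hA.eigenvalues i then hA.eigenvalues i ^ 2 else 0) ≤ (Q * Q).trace := by
  set f : ℝ → ℝ := fun x => if 0 < x then 1 else 0 with hf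
  set g : ℝ → ℝ := fun x => if 0 < x then x else 0 with hg
  set P := conjD hA f with hP
  set Ap := conjD hA g with hAp
  have hfnn : ∀ x, 0 ≤ f x := fun x => by rw [hf]; positivity
  have hgnn : ∀ x, 0 ≤ g x := fun x => by rw [hg]; dsimp; split <;> [linarith; rfl]
  have hPpsd : P.PosSemidef := conjD_psd hA hfnn
  have hAppsd : Ap.PosSemidef := conjD_psd hA hgnn
  have hPh : Pᴴ = P := hPpsd.isHermitian.eq
  have hff : (fun x => f x * f x) = f := by
    funext x; rw [hf]; dsimp; split <;> simp
  have hfgf : (fun x => f x * x * f x) = g := by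
    funext x; rw [hf, hg]; dsimp; split <;> simp
  have hgg : ∀ i, g (hA.eigenvalues i) * g (hA.eigenvalues i)
      = if 0 < hA.eigenvalues i then hA.eigenvalues i ^ 2 else 0 := by
    intro i; rw [hg]; dsimp; split <;> [ring; simp]
  have hPP : P * P = P := by rw [hP, conjD_mul, hff]
  have hPAP : P * A * P = Ap := by
    conv_lhs => rw [← conjD_id hA]
    rw [hP, conjD_mul, conjD_mul, hAp]
    exact congrArg (conjD hA) (funext fun x => by by_cases h : 0 < x <;> simp [hf, hg, h])
  have hApAp : (Ap * Ap).trace = ∑ i, if 0 < hA.eigenvalues i then hA.eigenvalues i ^ 2 else 0 := by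
    rw [hAp, conjD_mul, conjD_trace]
    exact Finset.sum_congr rfl fun i _ => hgg i
  -- step 1 : tr(Ap²) ≤ tr((PQP)²)
  set X := P * Q * P with hX
  have hXpsd : X.PosSemidef := by
    have h := hQ.mul_mul_conjTranspose_same P
    rwa [hPh] at h
  have hXA : (X - Ap).PosSemidef := by
    have he : X - Ap = P * (Q - A) * P := by rw [hX, ← hPAP]; noncomm_ring
    have h := hle.mul_mul_conjTranspose_same P
    rw [hPh] at h
    rwa [he]
  have step1 : (Ap * Ap).trace ≤ (X * X).trace := trace_sq_mono hXpsd hAppsd hXA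
  -- step 2 : tr(X²) ≤ tr(Q²)
  have hQh : Qᴴ = Q := hQ.isHermitian.eq
  have hQQpsd : (Q * Q).PosSemidef := by
    have h := posSemidef_conjTranspose_mul_self Q
    rwa [hQh] at h
  have hQPQpsd : (Q * P * Q).PosSemidef := by
    have h := hPpsd.mul_mul_conjTranspose_same Q
    rwa [hQh] at h
  have h1mP : ((1 : Matrix n n ℝ) - P).PosSemidef := by
    have he : (1 : Matrix n n ℝ) - P = conjD hA (fun x => 1 - f x) := by
      rw [← conjD_one hA, hP]
      unfold conjD
      rw [← Matrix.sub_mul, ← Matrix.mul_sub, diagonal_sub]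
      rfl
    rw [he]
    refine conjD_psd hA fun x => ?_
    rw [hf]; dsimp; split <;> norm_num
  have t1 : 0 ≤ (((1 : Matrix n n ℝ) - P) * (Q * Q)).trace := trace_mul_nonneg h1mP hQQpsd
  have t2 : 0 ≤ ((Q * P * Q) * ((1 : Matrix n n ℝ) - P)).trace := trace_mul_nonneg hQPQpsd h1mP
  have etr : (X * X).trace = ((P * Q) * (P * Q)).trace := by
    have he : X * X = P * Q * (P * P) * Q * P := by rw [hX]; noncomm_ring
    rw [hPP] at he
    rw [he, Matrix.trace_mul_comm,
      show P * (P * Q * P * Q) = (P * P) * (Q * (P * Q)) from by noncomm_ring, hPP,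
      ← Matrix.mul_assoc]
  have d1 : ((1 - P) * (Q * Q)).trace = (Q * Q).trace - (P * (Q * Q)).trace := by
    rw [Matrix.sub_mul, Matrix.one_mul, Matrix.trace_sub]
  have d2 : ((Q * P * Q) * (1 - P)).trace = (Q * P * Q).trace - ((Q * P * Q) * P).trace := by
    rw [Matrix.mul_sub, Matrix.mul_one, Matrix.trace_sub]
  have c1 : ((Q * P * Q) * P).trace = ((P * Q) * (P * Q)).trace := by
    rw [Matrix.trace_mul_comm]
    exact congrArg Matrix.trace (by noncomm_ring)
  have ecyc : (Q * P * Q).trace = (P * (Q * Q)).trace := by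
    rw [Matrix.trace_mul_comm, show Q * (Q * P) = (Q * Q) * P from by noncomm_ring,
      Matrix.trace_mul_comm]
  have step2 : (X * X).trace ≤ (Q * Q).trace := by
    rw [etr]; linarith [t1, t2, d1, d2, c1, ecyc]
  calc (∑ i, if 0 < hA.eigenvalues i then hA.eigenvalues i ^ 2 else 0)
      = (Ap * Ap).trace := hApAp.symm
    _ ≤ (X * X).trace := step1
    _ ≤ (Q * Q).trace := step2

lemma sum_comp_le {n m : Type*} [Fintype n] [DecidableEq n] [Fintype m] [DecidableEq m]
    (e : m → n) (hinj : Function.Injective e) (F : n → ℝ) (hF : ∀ i, 0 ≤ F i) :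
    ∑ a : m, F (e a) ≤ ∑ i : n, F i :=
  calc ∑ a : m, F (e a)
      = ∑ i ∈ Finset.univ.image e, F i :=
        (Finset.sum_image (fun x _ y _ h => hinj h)).symm
    _ ≤ ∑ i : n, F i :=
        Finset.sum_le_sum_of_subset_of_nonneg (Finset.subset_univ _) fun i _ _ => hF i

lemma trace_sq_eq {k : Type*} [Fintype k] (M : Matrix k k ℝ) :
    (M * M).trace = ∑ i, ∑ j, M i j * M j i := by
  simp [Matrix.trace, Matrix.mul_apply, Matrix.diag]

set_option maxHeartbeats 1000000 in
lemma key2 {n m : Type*} [Fintype n] [DecidableEq n] [Fintype m] [DecidableEq m]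
    {A : Matrix n n ℝ} {B : Matrix m m ℝ} (hA : A.IsHermitian) (hB : B.IsHermitian)
    (e : m → n) (hinj : Function.Injective e) (hsub : B = A.submatrix e e) :
    (∑ i, if 0 < hB.eigenvalues i then hB.eigenvalues i ^ 2 else 0) ≤
      ∑ i, if 0 < hA.eigenvalues i then hA.eigenvalues i ^ 2 else 0 := by
  set g : ℝ → ℝ := fun x => if 0 < x then x else 0 with hg
  set P := conjD hA g with hP
  have hgnn : ∀ x, 0 ≤ g x := fun x => by
    rw [hg]; dsimp; split <;> [linarith; rfl]
  have hPpsd : P.PosSemidef := conjD_psd hA hgnn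
  have hPA : (P - A).PosSemidef := by
    have he : P - A = conjD hA (fun x => g x - x) := by
      rw [hP]
      calc conjD hA g - A = conjD hA g - conjD hA id := by rw [conjD_id]
        _ = conjD hA (fun x => g x - x) := by
            unfold conjD
            rw [← Matrix.sub_mul, ← Matrix.mul_sub, diagonal_sub]
            rfl
    rw [he]
    refine conjD_psd hA fun x => ?_
    rw [hg]; dsimp; split <;> [simp; linarith [le_of_not_gt (by assumption : ¬ 0 < x)]]
  set Q := P.submatrix e e with hQ
  have hQpsd : Q.PosSemidef := hPpsd.submatrix e
  have hQB : (Q - B).PosSemidef := by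
    rw [hQ, hsub]
    exact hPA.submatrix e
  have h1 := key_ineq hB hQpsd hQB
  -- trace (Q*Q) ≤ trace (P*P)
  have hPsym : ∀ i j, P j i = P i j := fun i j => by
    simpa using hPpsd.isHermitian.apply i j
  have h2 : (Q * Q).trace ≤ (P * P).trace := by
    rw [trace_sq_eq, trace_sq_eq]
    have hrw : ∀ (i j : n), P i j * P j i = (P i j) ^ 2 := fun i j => by
      rw [hPsym i j]; ring
    calc ∑ a : m, ∑ b : m, Q a b * Q b a
        = ∑ a : m, ∑ b : m, (P (e a) (e b)) ^ 2 := by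
          refine Finset.sum_congr rfl fun a _ => Finset.sum_congr rfl fun b _ => ?_
          rw [hQ, Matrix.submatrix_apply, Matrix.submatrix_apply, hrw]
      _ ≤ ∑ a : m, ∑ j : n, (P (e a) j) ^ 2 := by
          refine Finset.sum_le_sum fun a _ => ?_
          exact sum_comp_le e hinj (fun j => (P (e a) j) ^ 2) (fun j => sq_nonneg _)
      _ ≤ ∑ i : n, ∑ j : n, (P i j) ^ 2 := by
          exact sum_comp_le e hinj (fun i => ∑ j : n, (P i j) ^ 2)
            (fun i => Finset.sum_nonneg fun j _ => sq_nonneg _)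
      _ = ∑ i : n, ∑ j : n, P i j * P j i := by
          refine Finset.sum_congr rfl fun i _ => Finset.sum_congr rfl fun j _ => (hrw i j).symm
  have h3 : (P * P).trace = ∑ i, if 0 < hA.eigenvalues i then hA.eigenvalues i ^ 2 else 0 := by
    rw [hP, conjD_mul, conjD_trace]
    refine Finset.sum_congr rfl fun i _ => ?_
    by_cases h : 0 < hA.eigenvalues i
    · simp [hg, h]; ring
    · simp [hg, h]
  linarith

end Aux

/-- For an induced subgraph `H` of `G`, `s⁺(G) ≥ s⁺(H)`. -/
theorem sPlus_ge_sPlus_induced {V : Type*} [Fintype V] [DecidableEq V]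
    (G : SimpleGraph V) (s : Finset V) :
    sPlus G ≥ sPlus (G.induce (↑s : Set V)) := by
  letI : DecidableRel G.Adj := Classical.decRel G.Adj
  letI : DecidableRel (G.induce (↑s : Set V)).Adj := Classical.decRel _
  have hA : ((G.adjMatrix ℝ)).IsHermitian := adjMatrix_isHermitian G
  have hB : (((G.induce (↑s : Set V)).adjMatrix ℝ)).IsHermitian := adjMatrix_isHermitian _
  have hsub : (G.induce (↑s : Set V)).adjMatrix ℝ
      = (G.adjMatrix ℝ).submatrix (Subtype.val) (Subtype.val) := by
    ext a b
    simp only [SimpleGraph.adjMatrix_apply, Matrix.submatrix_apply]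
    exact if_congr Iff.rfl rfl rfl
  have h := key2 hA hB Subtype.val Subtype.val_injective hsub
  simp only [ge_iff_le, sPlus, adjEigenvalues]
  exact h
end

section
/- Let G be a finite simple graph on n ≥ 2 vertices with eigenvalues λ_1(G) ≥ … ≥ λ_n(G), let v be a vertex of G, and let G−v be the induced subgraph obtained by deleting v, with eigenvalues λ_1(G−v) ≥ … ≥ λ_{n−1}(G−v). Then s^-(G) ≥ λ_n(G)² + s^-(G−v) − λ_{n−1}(G−v)². -/
open Matrix

variable {V : Type*}

section AuxNSE
open Matrix Finset



variable {ι : Type*} [Fintype ι] [DecidableEq ι]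

lemma exists_eigenfamily (A : Matrix ι ι ℝ) (hA : A.IsHermitian) :
    ∃ u : ι → ι → ℝ,
      (∀ i j, u i ⬝ᵥ u j = if i = j then 1 else 0) ∧
      (∀ j, A *ᵥ u j = hA.eigenvalues j • u j) ∧
      (∀ x : ι → ℝ, ∑ j, (u j ⬝ᵥ x) • u j = x) := by
  set U : Matrix ι ι ℝ := (hA.eigenvectorUnitary : Matrix ι ι ℝ) with hU
  have hsU : star U * U = 1 := Unitary.coe_star_mul_self hA.eigenvectorUnitary
  have hUs : U * star U = 1 := Unitary.coe_mul_star_self hA.eigenvectorUnitary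
  refine ⟨fun j i => U i j, ?_, ?_, ?_⟩
  · intro i j
    have := congrFun (congrFun hsU i) j
    simpa [Matrix.mul_apply, Matrix.one_apply, dotProduct, star_apply, mul_comm] using this
  · intro j
    show A *ᵥ (fun i => U i j) = _
    have h1 : (fun i => U i j) = ⇑(hA.eigenvectorBasis j) := by
      funext i; exact hA.eigenvectorUnitary_apply i j
    rw [h1]; exact hA.mulVec_eigenvectorBasis j
  · intro x
    funext i
    have key : ∀ k, (U * star U) i k = (1 : Matrix ι ι ℝ) i k :=
      fun k => congrFun (congrFun hUs i) k
    calc (∑ j, ((fun i => U i j) ⬝ᵥ x) • fun i => U i j) i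
        = ∑ j, ∑ k, U i j * (U k j * x k) := by
          simp only [Finset.sum_apply, dotProduct, Pi.smul_apply, smul_eq_mul]
          congr 1; funext j
          rw [Finset.sum_mul]; congr 1; funext k; ring
      _ = ∑ k, (∑ j, U i j * U k j) * x k := by
          rw [Finset.sum_comm]; congr 1; funext k
          rw [Finset.sum_mul]; congr 1; funext j; ring
      _ = ∑ k, (1 : Matrix ι ι ℝ) i k * x k := by
          congr 1; funext k
          rw [← key k]
          simp [Matrix.mul_apply, star_apply]
      _ = x i := by simp [Matrix.one_apply]

section Helpers
variable {ι κ : Type*} [Fintype ι] [Fintype κ]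

lemma dot_sum (x : ι → ℝ) (z : κ → ι → ℝ) : x ⬝ᵥ (∑ j, z j) = ∑ j, x ⬝ᵥ z j := by
  simp only [dotProduct, Finset.sum_apply, Finset.mul_sum]
  exact Finset.sum_comm

lemma sum_dot (x : ι → ℝ) (z : κ → ι → ℝ) : (∑ j, z j) ⬝ᵥ x = ∑ j, z j ⬝ᵥ x := by
  simp only [dotProduct, Finset.sum_apply, Finset.sum_mul]
  exact Finset.sum_comm

end Helpers

section Quad
variable {ι : Type*} [Fintype ι] [DecidableEq ι]
variable {A : Matrix ι ι ℝ} {eig : ι → ℝ} {u : ι → ι → ℝ}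

lemma quad_eq (heig : ∀ j, A *ᵥ u j = eig j • u j)
    (hcomp : ∀ x : ι → ℝ, ∑ j, (u j ⬝ᵥ x) • u j = x) (x : ι → ℝ) :
    x ⬝ᵥ (A *ᵥ x) = ∑ j, eig j * (u j ⬝ᵥ x)^2 := by
  have h1 : A *ᵥ x = ∑ j, (u j ⬝ᵥ x) • (eig j • u j) := by
    conv_lhs => rw [← hcomp x]
    have := map_sum A.mulVecLin (fun j => (u j ⬝ᵥ x) • u j) Finset.univ
    simp only [mulVecLin_apply] at this
    rw [this]
    congr 1; funext j
    rw [mulVec_smul, heig j]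
  rw [h1, dot_sum]
  congr 1; funext j
  rw [dotProduct_smul, dotProduct_smul, dotProduct_comm]
  simp [smul_eq_mul]; ring

lemma norm_eq (hcomp : ∀ x : ι → ℝ, ∑ j, (u j ⬝ᵥ x) • u j = x) (x : ι → ℝ) :
    x ⬝ᵥ x = ∑ j, (u j ⬝ᵥ x)^2 := by
  nth_rewrite 1 [← hcomp x]
  rw [sum_dot]
  congr 1; funext j
  rw [smul_dotProduct]
  simp [smul_eq_mul]; ring

end Quad

section extByZero
variable {ιA ιB : Type*} [Fintype ιA] [DecidableEq ιA] [Fintype ιB] [DecidableEq ιB]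

/-- Extension by zero along an injection. -/
def extByZero (φ : ιB → ιA) (y : ιB → ℝ) : ιA → ℝ := fun i => ∑ j, if φ j = i then y j else 0

lemma extz_dot (φ : ιB → ιA) (y : ιB → ℝ) (x : ιA → ℝ) :
    extByZero φ y ⬝ᵥ x = ∑ j, y j * x (φ j) := by
  simp only [dotProduct, extByZero, Finset.sum_mul, ite_mul, zero_mul]
  rw [Finset.sum_comm]
  congr 1; funext j
  simp [Finset.sum_ite_eq]

lemma dot_Ext (φ : ιB → ιA) (x : ιA → ℝ) (y : ιB → ℝ) :
    x ⬝ᵥ extByZero φ y = ∑ j, x (φ j) * y j := by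
  rw [dotProduct_comm, extz_dot]
  congr 1; funext j; ring

lemma extz_apply (φ : ιB → ιA) (hφ : Function.Injective φ) (y : ιB → ℝ) (j : ιB) :
    extByZero φ y (φ j) = y j := by
  simp [extByZero, hφ.eq_iff, Finset.sum_ite_eq']

lemma extz_dot_Ext (φ : ιB → ιA) (hφ : Function.Injective φ) (y z : ιB → ℝ) :
    extByZero φ y ⬝ᵥ extByZero φ z = y ⬝ᵥ z := by
  rw [extz_dot]
  congr 1; funext j
  rw [extz_apply φ hφ]

lemma extz_quad (φ : ιB → ιA) (hφ : Function.Injective φ) (A : Matrix ιA ιA ℝ)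
    (B : Matrix ιB ιB ℝ) (hsub : ∀ j k, B j k = A (φ j) (φ k)) (y z : ιB → ℝ) :
    extByZero φ y ⬝ᵥ (A *ᵥ extByZero φ z) = y ⬝ᵥ (B *ᵥ z) := by
  rw [extz_dot]
  congr 1; funext j
  have : (A *ᵥ extByZero φ z) (φ j) = ∑ k, A (φ j) (φ k) * z k := dot_Ext φ (A (φ j)) z
  rw [this]
  simp only [mulVec, dotProduct]
  congr 1
  exact Finset.sum_congr rfl fun k _ => by rw [hsub]

lemma extz_sum_smul (φ : ιB → ιA) {κ : Type*} [Fintype κ] (c : κ → ℝ) (ys : κ → ιB → ℝ) :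
    extByZero φ (∑ i, c i • ys i) = ∑ i, c i • extByZero φ (ys i) := by
  funext l
  simp only [extByZero, Finset.sum_apply, Pi.smul_apply, smul_eq_mul, Finset.mul_sum, mul_ite, mul_zero]
  rw [Finset.sum_comm]
  congr 1; funext i
  split <;> simp
end extByZero


section Interlace
variable {ιA ιB : Type*} [Fintype ιA] [DecidableEq ιA] [Fintype ιB] [DecidableEq ιB]

lemma interlacing (A : Matrix ιA ιA ℝ) (hA : A.IsHermitian) (B : Matrix ιB ιB ℝ)
    (hB : B.IsHermitian) (φ : ιB → ιA) (hφ : Function.Injective φ)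
    (hsub : ∀ j k, B j k = A (φ j) (φ k))
    (p : Fin (Fintype.card ιB + 1) ≃ ιA) (q : Fin (Fintype.card ιB) ≃ ιB)
    (hpmono : Monotone (hA.eigenvalues ∘ p)) (hqmono : Monotone (hB.eigenvalues ∘ q))
    (k : Fin (Fintype.card ιB)) :
    hA.eigenvalues (p k.castSucc) ≤ hB.eigenvalues (q k) := by
  obtain ⟨u, huo, hue, huc⟩ := exists_eigenfamily A hA
  obtain ⟨w, hwo, hwe, hwc⟩ := exists_eigenfamily B hB
  -- the embedded low eigenvectors of B
  have hkn : k.val < Fintype.card ιB := k.isLt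
  let embB : Fin (k.val + 1) → ιB := fun i => q ⟨i.val, by have := i.isLt; omega⟩
  have hembB : Function.Injective embB := by
    intro i i' h
    have := q.injective h
    have := Fin.val_eq_of_eq this
    exact Fin.ext (by simpa using this)
  let vecs : Fin (k.val + 1) → (ιA → ℝ) := fun i => extByZero φ (w (embB i))
  let Φ : (Fin (k.val + 1) → ℝ) →ₗ[ℝ] (Fin k.val → ℝ) :=
    { toFun := fun a => fun j =>
        u (p ⟨j.val, by have := j.isLt; omega⟩) ⬝ᵥ ∑ i, a i • vecs i
      map_add' := by
        intro a b
        funext j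
        simp only [Pi.add_apply, add_smul, Finset.sum_add_distrib, dotProduct_add]
      map_smul' := by
        intro c a
        funext j
        simp only [Pi.smul_apply, smul_eq_mul, RingHom.id_apply]
        rw [show (∑ i, (c * a i) • vecs i) = c • ∑ i, a i • vecs i by
          rw [Finset.smul_sum]; congr 1; funext i; rw [smul_smul]]
        rw [dotProduct_smul]
        rfl }
  have hker : ∃ a : Fin (k.val + 1) → ℝ, a ≠ 0 ∧ Φ a = 0 := by
    by_contra hcon
    push_neg at hcon
    have hinj : Function.Injective Φ := by
      rw [← LinearMap.ker_eq_bot]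
      rw [LinearMap.ker_eq_bot']
      intro m hm
      by_contra hmne
      exact hcon m hmne hm
    have hle := LinearMap.finrank_le_finrank_of_injective hinj
    rw [Module.finrank_pi, Module.finrank_pi, Fintype.card_fin, Fintype.card_fin] at hle
    omega
  obtain ⟨a, ha0, haker⟩ := hker
  set y : ιB → ℝ := ∑ i, a i • w (embB i) with hy
  set x : ιA → ℝ := extByZero φ y with hx
  have hxsum : x = ∑ i, a i • vecs i := by
    rw [hx, hy, extz_sum_smul]
  -- coordinates of y in the w-basis
  have hcB : ∀ m : ιB, w m ⬝ᵥ y = ∑ i, (if m = embB i then a i else 0) := by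
    intro m
    rw [hy, dot_sum]
    congr 1; funext i
    rw [dotProduct_smul, hwo m (embB i)]
    by_cases h : m = embB i <;> simp [h]
  have hcB_emb : ∀ i, w (embB i) ⬝ᵥ y = a i := by
    intro i
    rw [hcB]
    rw [Finset.sum_eq_single i]
    · simp
    · intro i' _ hne
      have : embB i ≠ embB i' := fun h => hne (hembB h).symm
      simp [this]
    · simp
  have hcB_out : ∀ m : ιB, (∀ i, m ≠ embB i) → w m ⬝ᵥ y = 0 := by
    intro m hm
    rw [hcB]
    exact Finset.sum_eq_zero fun i _ => by simp [hm i]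
  -- positivity of ‖y‖²
  have hyy : 0 < y ⬝ᵥ y := by
    rw [norm_eq hwc]
    obtain ⟨i0, hi0⟩ : ∃ i0, a i0 ≠ 0 := by
      by_contra hall
      push_neg at hall
      exact ha0 (funext hall)
    apply Finset.sum_pos'
    · intro m _; positivity
    · exact ⟨embB i0, Finset.mem_univ _, by rw [hcB_emb i0]; positivity⟩
  -- upper bound for the B-quadratic form
  have hQB : y ⬝ᵥ (B *ᵥ y) ≤ hB.eigenvalues (q k) * (y ⬝ᵥ y) := by
    rw [quad_eq hwe hwc, norm_eq hwc, Finset.mul_sum]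
    rw [← Equiv.sum_comp q (fun m => hB.eigenvalues m * (w m ⬝ᵥ y) ^ 2),
        ← Equiv.sum_comp q (fun m => hB.eigenvalues (q k) * (w m ⬝ᵥ y) ^ 2)]
    apply Finset.sum_le_sum
    intro i' _
    by_cases hik : i'.val ≤ k.val
    · have : hB.eigenvalues (q i') ≤ hB.eigenvalues (q k) := by
        have h := hqmono (show i' ≤ k from hik)
        simpa using h
      nlinarith [sq_nonneg (w (q i') ⬝ᵥ y)]
    · have : w (q i') ⬝ᵥ y = 0 := by
        apply hcB_out
        intro i h
        have := q.injective h
        have := Fin.val_eq_of_eq this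
        simp at this
        omega
      rw [this]
      simp
  -- lower bound for the A-quadratic form
  have hQA : hA.eigenvalues (p k.castSucc) * (x ⬝ᵥ x) ≤ x ⬝ᵥ (A *ᵥ x) := by
    rw [quad_eq hue huc, norm_eq huc, Finset.mul_sum]
    rw [← Equiv.sum_comp p (fun m => hA.eigenvalues m * (u m ⬝ᵥ x) ^ 2),
        ← Equiv.sum_comp p (fun m => hA.eigenvalues (p k.castSucc) * (u m ⬝ᵥ x) ^ 2)]
    apply Finset.sum_le_sum
    intro j _
    by_cases hjk : j.val < k.val
    · have hzero : u (p j) ⬝ᵥ x = 0 := by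
        have := congrFun haker ⟨j.val, hjk⟩
        simp only [LinearMap.coe_mk, AddHom.coe_mk, Pi.zero_apply] at this
        rw [hxsum]
        convert this using 3
        rfl
      rw [hzero]
      simp
    · have hle : k.castSucc ≤ j := by
        rw [Fin.le_def]
        simp only [Fin.coe_castSucc]
        omega
      have : hA.eigenvalues (p k.castSucc) ≤ hA.eigenvalues (p j) := by
        have h := hpmono hle
        simpa using h
      nlinarith [sq_nonneg (u (p j) ⬝ᵥ x)]
  -- combine
  have hxx : x ⬝ᵥ x = y ⬝ᵥ y := extz_dot_Ext φ hφ y y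
  have hq : x ⬝ᵥ (A *ᵥ x) = y ⬝ᵥ (B *ᵥ y) := extz_quad φ hφ A B hsub y y
  have := hQA.trans (hq.le.trans hQB)
  rw [hxx] at this
  exact le_of_mul_le_mul_right (by linarith [this]) hyy

end Interlace


section Key

private lemma f_nonneg (t : ℝ) : 0 ≤ (if t < 0 then t ^ 2 else 0) := by
  split <;> positivity

private lemma f_le_sq (t : ℝ) : (if t < 0 then t ^ 2 else 0) ≤ t ^ 2 := by
  split
  · exact le_rfl
  · positivity

private lemma f_anti {t s : ℝ} (h : t ≤ s) :
    (if s < 0 then s ^ 2 else 0) ≤ (if t < 0 then t ^ 2 else 0) := by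
  split
  · rename_i hs
    rw [if_pos (lt_of_le_of_lt h hs)]
    nlinarith
  · exact f_nonneg t

private lemma f_eq_sq {t : ℝ} (h : t ≤ 0) : (if t < 0 then t ^ 2 else 0) = t ^ 2 := by
  rcases lt_or_eq_of_le h with h' | h'
  · rw [if_pos h']
  · simp [h']

variable {ιA ιB : Type*} [Fintype ιA] [DecidableEq ιA] [Fintype ιB] [DecidableEq ιB]

lemma exists_eigenvalue_nonpos (A : Matrix ιA ιA ℝ) (hA : A.IsHermitian)
    (hdiag : ∃ i, A i i = 0) : ∃ j, hA.eigenvalues j ≤ 0 := by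
  obtain ⟨i, hi⟩ := hdiag
  obtain ⟨u, huo, hue, huc⟩ := exists_eigenfamily A hA
  by_contra hcon
  push_neg at hcon
  have h1 : (Pi.single i 1 : ιA → ℝ) ⬝ᵥ (A *ᵥ Pi.single i 1) = A i i := by
    rw [mulVec_single]
    simp [dotProduct, Pi.single_apply]
  have h2 : (Pi.single i 1 : ιA → ℝ) ⬝ᵥ (Pi.single i 1 : ιA → ℝ) = 1 := by
    simp [dotProduct, Pi.single_apply]
  rw [quad_eq hue huc] at h1
  rw [norm_eq huc] at h2
  obtain ⟨j0, hj0⟩ : ∃ j0, (u j0 ⬝ᵥ (Pi.single i 1 : ιA → ℝ)) ^ 2 ≠ 0 := by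
    by_contra hall
    push_neg at hall
    rw [Finset.sum_eq_zero (fun j _ => hall j)] at h2
    norm_num at h2
  have hpos : 0 < ∑ j, hA.eigenvalues j * (u j ⬝ᵥ (Pi.single i 1 : ιA → ℝ)) ^ 2 := by
    apply Finset.sum_pos'
    · intro j _
      have := (hcon j).le
      positivity
    · refine ⟨j0, Finset.mem_univ _, ?_⟩
      have h3 : 0 < (u j0 ⬝ᵥ (Pi.single i 1 : ιA → ℝ)) ^ 2 :=
        lt_of_le_of_ne (sq_nonneg _) (Ne.symm hj0)
      exact mul_pos (hcon j0) h3
  rw [h1, hi] at hpos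
  exact lt_irrefl 0 hpos

theorem key_matrix [Nonempty ιB]
    (A : Matrix ιA ιA ℝ) (hA : A.IsHermitian) (B : Matrix ιB ιB ℝ) (hB : B.IsHermitian)
    (φ : ιB → ιA) (hφ : Function.Injective φ)
    (hcard : Fintype.card ιA = Fintype.card ιB + 1)
    (hsub : ∀ j k, B j k = A (φ j) (φ k))
    (hdiag : ∃ i : ιA, A i i = 0) :
    (∑ j, if hA.eigenvalues j < 0 then hA.eigenvalues j ^ 2 else 0)
      ≥ (⨅ j, hA.eigenvalues j) ^ 2
        + (∑ i, if hB.eigenvalues i < 0 then hB.eigenvalues i ^ 2 else 0)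
        - (⨅ i, hB.eigenvalues i) ^ 2 := by
  haveI hNZ : NeZero (Fintype.card ιB) := ⟨Fintype.card_ne_zero⟩
  haveI : Nonempty ιA := Fintype.card_pos_iff.mp (by omega)
  -- sorted eigenvalue sequences
  let eA : Fin (Fintype.card ιB + 1) ≃ ιA := (Fintype.equivFinOfCardEq hcard).symm
  let eB : Fin (Fintype.card ιB) ≃ ιB := (Fintype.equivFin ιB).symm
  let σA := Tuple.sort (hA.eigenvalues ∘ eA)
  let σB := Tuple.sort (hB.eigenvalues ∘ eB)
  let p : Fin (Fintype.card ιB + 1) ≃ ιA := σA.trans eA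
  let q : Fin (Fintype.card ιB) ≃ ιB := σB.trans eB
  have hpmono : Monotone (hA.eigenvalues ∘ p) := Tuple.monotone_sort (hA.eigenvalues ∘ eA)
  have hqmono : Monotone (hB.eigenvalues ∘ q) := Tuple.monotone_sort (hB.eigenvalues ∘ eB)
  set LA : Fin (Fintype.card ιB + 1) → ℝ := hA.eigenvalues ∘ p with hLA
  set LB : Fin (Fintype.card ιB) → ℝ := hB.eigenvalues ∘ q with hLB
  -- infima are the first sorted values
  have hinfA : (⨅ j, hA.eigenvalues j) = LA 0 := by
    apply le_antisymm
    · exact ciInf_le (Set.Finite.bddBelow (Set.finite_range _)) (p 0)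
    · apply le_ciInf
      intro jA
      have : jA = p (p.symm jA) := (p.apply_symm_apply jA).symm
      rw [this]
      exact hpmono (Fin.zero_le _)
  have hinfB : (⨅ i, hB.eigenvalues i) = LB 0 := by
    apply le_antisymm
    · exact ciInf_le (Set.Finite.bddBelow (Set.finite_range _)) (q 0)
    · apply le_ciInf
      intro jB
      have : jB = q (q.symm jB) := (q.apply_symm_apply jB).symm
      rw [this]
      exact hqmono (Fin.zero_le _)
  -- interlacing
  have hint : ∀ k : Fin (Fintype.card ιB), LA k.castSucc ≤ LB k := fun k =>
    interlacing A hA B hB φ hφ hsub p q hpmono hqmono k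
  -- smallest eigenvalue of A is ≤ 0
  have hLA0 : LA 0 ≤ 0 := by
    obtain ⟨j, hj⟩ := exists_eigenvalue_nonpos A hA hdiag
    calc LA 0 ≤ hA.eigenvalues j := by
          rw [show j = p (p.symm j) from (p.apply_symm_apply j).symm]
          exact hpmono (Fin.zero_le _)
      _ ≤ 0 := hj
  -- rewrite sums in sorted form
  have hsumA : (∑ j, if hA.eigenvalues j < 0 then hA.eigenvalues j ^ 2 else 0)
      = ∑ j : Fin (Fintype.card ιB + 1), (if LA j < 0 then LA j ^ 2 else 0) :=
    (Equiv.sum_comp p (fun jA => if hA.eigenvalues jA < 0 then hA.eigenvalues jA ^ 2 else 0)).symm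
  have hsumB : (∑ i, if hB.eigenvalues i < 0 then hB.eigenvalues i ^ 2 else 0)
      = ∑ i : Fin (Fintype.card ιB), (if LB i < 0 then LB i ^ 2 else 0) :=
    (Equiv.sum_comp q (fun iB => if hB.eigenvalues iB < 0 then hB.eigenvalues iB ^ 2 else 0)).symm
  rw [hsumA, hsumB, hinfA, hinfB]
  -- the chain of inequalities
  have h1 : (∑ i : Fin (Fintype.card ιB), if LB i < 0 then LB i ^ 2 else 0)
      = (if LB 0 < 0 then LB 0 ^ 2 else 0)
        + ∑ i ∈ Finset.univ.erase (0 : Fin (Fintype.card ιB)), (if LB i < 0 then LB i ^ 2 else 0) :=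
    (Finset.add_sum_erase _ _ (Finset.mem_univ 0)).symm
  have h2 : (∑ i ∈ Finset.univ.erase (0 : Fin (Fintype.card ιB)), if LB i < 0 then LB i ^ 2 else 0)
      ≤ ∑ i ∈ Finset.univ.erase (0 : Fin (Fintype.card ιB)), (if LA i.castSucc < 0 then LA i.castSucc ^ 2 else 0) :=
    Finset.sum_le_sum fun i _ => f_anti (hint i)
  have h3 : (∑ i ∈ Finset.univ.erase (0 : Fin (Fintype.card ιB)), if LA i.castSucc < 0 then LA i.castSucc ^ 2 else 0)
      = ∑ j ∈ (Finset.univ.erase (0 : Fin (Fintype.card ιB))).image Fin.castSucc, (if LA j < 0 then LA j ^ 2 else 0) :=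
    (Finset.sum_image (f := fun j => if LA j < 0 then LA j ^ 2 else 0)
      (fun a _ b _ h => Fin.castSucc_injective _ h)).symm
  have h4 : (Finset.univ.erase (0 : Fin (Fintype.card ιB))).image Fin.castSucc ⊆ Finset.univ.erase (0 : Fin (Fintype.card ιB + 1)) := by
    intro j hj
    simp only [Finset.mem_image, Finset.mem_erase, Finset.mem_univ, and_true] at hj ⊢
    obtain ⟨i, hi0, rfl⟩ := hj
    simpa using hi0
  have h5 : (∑ j ∈ (Finset.univ.erase (0 : Fin (Fintype.card ιB))).image Fin.castSucc, if LA j < 0 then LA j ^ 2 else 0)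
      ≤ ∑ j ∈ Finset.univ.erase (0 : Fin (Fintype.card ιB + 1)), (if LA j < 0 then LA j ^ 2 else 0) :=
    Finset.sum_le_sum_of_subset_of_nonneg h4 (fun j _ _ => f_nonneg (LA j))
  have h6 : (∑ j : Fin (Fintype.card ιB + 1), if LA j < 0 then LA j ^ 2 else 0)
      = (if LA 0 < 0 then LA 0 ^ 2 else 0)
        + ∑ j ∈ Finset.univ.erase (0 : Fin (Fintype.card ιB + 1)), (if LA j < 0 then LA j ^ 2 else 0) :=
    (Finset.add_sum_erase _ _ (Finset.mem_univ 0)).symm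
  have h7 : (if LA 0 < 0 then LA 0 ^ 2 else 0) = LA 0 ^ 2 := f_eq_sq hLA0
  have h8 : (if LB 0 < 0 then LB 0 ^ 2 else 0) ≤ LB 0 ^ 2 := f_le_sq (LB 0)
  linarith

end Key

end AuxNSE

/-- For a graph `G` on `n ≥ 2` vertices and a vertex `v`,
`s⁻(G) ≥ λₙ(G)² + s⁻(G−v) − λ_{n−1}(G−v)²`. -/
theorem sMinus_ge_vertex_deleted {V : Type*} [Fintype V] [DecidableEq V]
    (G : SimpleGraph V) (hn : 2 ≤ Fintype.card V) (v : V) :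
    sMinus G ≥ (minEig G) ^ 2 + sMinus (G.induce (↑({v}ᶜ : Finset V) : Set V))
      - (minEig (G.induce (↑({v}ᶜ : Finset V) : Set V))) ^ 2 := by
  letI : DecidableRel G.Adj := Classical.decRel G.Adj
  letI : DecidableRel (G.induce (↑({v}ᶜ : Finset V) : Set V)).Adj :=
    Classical.decRel _
  have hA : ((G.adjMatrix ℝ)).IsHermitian := adjMatrix_isHermitian G
  have hB : (((G.induce (↑({v}ᶜ : Finset V) : Set V)).adjMatrix ℝ)).IsHermitian :=
    adjMatrix_isHermitian _
  have hcardT : Fintype.card (↑({v}ᶜ : Finset V) : Set V) = Fintype.card V - 1 := by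
    rw [Fintype.card_of_subtype ({v}ᶜ : Finset V) (fun x => by simp)]
    rw [Finset.card_compl, Finset.card_singleton]
  haveI : Nonempty (↑({v}ᶜ : Finset V) : Set V) := by
    rw [← Fintype.card_pos_iff, hcardT]
    omega
  have hcard : Fintype.card V = Fintype.card (↑({v}ᶜ : Finset V) : Set V) + 1 := by
    rw [hcardT]; omega
  have hsub : ∀ j k : (↑({v}ᶜ : Finset V) : Set V),
      (G.induce (↑({v}ᶜ : Finset V) : Set V)).adjMatrix ℝ j k
        = G.adjMatrix ℝ (↑j) (↑k) := by
    intro j k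
    have hiff : (G.induce (↑({v}ᶜ : Finset V) : Set V)).Adj j k ↔ G.Adj (↑j) (↑k) := by
      exact Iff.rfl
    by_cases h : G.Adj (↑j) (↑k)
    · rw [SimpleGraph.adjMatrix_apply, SimpleGraph.adjMatrix_apply,
        if_pos (hiff.mpr h), if_pos h]
    · rw [SimpleGraph.adjMatrix_apply, SimpleGraph.adjMatrix_apply,
        if_neg (fun hh => h (hiff.mp hh)), if_neg h]
  have hdiag : ∃ i : V, G.adjMatrix ℝ i i = 0 := ⟨v, by simp⟩
  have key := key_matrix (G.adjMatrix ℝ) hA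
    ((G.induce (↑({v}ᶜ : Finset V) : Set V)).adjMatrix ℝ) hB
    (Subtype.val) Subtype.val_injective hcard hsub hdiag
  have e1 : sMinus G = ∑ j, if hA.eigenvalues j < 0 then hA.eigenvalues j ^ 2 else 0 := rfl
  have e2 : minEig G = ⨅ j, hA.eigenvalues j := rfl
  have e3 : sMinus (G.induce (↑({v}ᶜ : Finset V) : Set V))
      = ∑ i, if hB.eigenvalues i < 0 then hB.eigenvalues i ^ 2 else 0 := rfl
  have e4 : minEig (G.induce (↑({v}ᶜ : Finset V) : Set V)) = ⨅ i, hB.eigenvalues i := rfl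
  rw [e1, e2, e3, e4]
  exact key
end

section
/- Let G be a finite simple graph on n ≥ 2 vertices with eigenvalues λ_1(G) ≥ … ≥ λ_n(G), let v be a vertex of G, and let G−v be the induced subgraph obtained by deleting v, with eigenvalues λ_1(G−v) ≥ … ≥ λ_{n−1}(G−v). Then s^+(G) ≥ λ_1(G)² + s^+(G−v) − λ_1(G−v)². -/
set_option linter.unusedSectionVars false
set_option maxHeartbeats 1600000
open Matrix Finset

section Helpers

variable {V : Type*} {W : Type*} [Fintype V] [Fintype W] [DecidableEq V] [DecidableEq W]

lemma sum_dotProduct' {ι : Type*} (s : Finset ι) (f : ι → (V → ℝ)) (v : V → ℝ) :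
    (∑ i ∈ s, f i) ⬝ᵥ v = ∑ i ∈ s, f i ⬝ᵥ v := by
  simp only [dotProduct, Finset.sum_apply, Finset.sum_mul]
  exact Finset.sum_comm

lemma dotProduct_sum' {ι : Type*} (s : Finset ι) (v : V → ℝ) (f : ι → (V → ℝ)) :
    v ⬝ᵥ (∑ i ∈ s, f i) = ∑ i ∈ s, v ⬝ᵥ f i := by
  simp only [dotProduct, Finset.sum_apply, Finset.mul_sum]
  exact Finset.sum_comm

lemma mulVec_sum' {ι : Type*} (s : Finset ι) (A : Matrix V V ℝ) (f : ι → (V → ℝ)) :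
    A *ᵥ (∑ i ∈ s, f i) = ∑ i ∈ s, A *ᵥ f i := by
  funext k
  simp only [Matrix.mulVec, Finset.sum_apply, dotProduct, Finset.mul_sum,
    Finset.sum_apply]
  exact Finset.sum_comm

lemma linearIndependent_of_dot {ι : Type*} [Fintype ι] [DecidableEq ι] (w : ι → (V → ℝ))
    (h : ∀ i j, w i ⬝ᵥ w j = if i = j then (1:ℝ) else 0) : LinearIndependent ℝ w := by
  rw [linearIndependent_iff']
  intro s g hg i hi
  have h2 := congrArg (fun x => x ⬝ᵥ w i) hg
  simp only [sum_dotProduct', smul_dotProduct, smul_eq_mul, h, mul_ite, mul_one,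
    mul_zero, Finset.sum_ite_eq, Finset.sum_ite_eq', hi, if_true, zero_dotProduct] at h2
  exact h2

lemma dot_sum_smul_self {ι : Type*} [Fintype ι] [DecidableEq ι] (w : ι → (V → ℝ))
    (hdot : ∀ i j, w i ⬝ᵥ w j = if i = j then (1:ℝ) else 0) (c : ι → ℝ) :
    (∑ i, c i • w i) ⬝ᵥ (∑ i, c i • w i) = ∑ i, c i ^ 2 := by
  simp only [sum_dotProduct', dotProduct_sum', smul_dotProduct,
    dotProduct_smul, smul_eq_mul, hdot, mul_ite, mul_one, mul_zero,
    Finset.sum_ite_eq, Finset.sum_ite_eq', Finset.mem_univ, if_true]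
  exact Finset.sum_congr rfl fun i _ => by ring

lemma dot_sum_smul_form {ι : Type*} [Fintype ι] [DecidableEq ι] (A : Matrix V V ℝ)
    (w : ι → (V → ℝ)) (ρ : ι → ℝ)
    (hform : ∀ i j, w i ⬝ᵥ (A *ᵥ w j) = if i = j then ρ j else 0) (c : ι → ℝ) :
    (∑ i, c i • w i) ⬝ᵥ (A *ᵥ ∑ i, c i • w i) = ∑ i, ρ i * c i ^ 2 := by
  have hAv : A *ᵥ (∑ i, c i • w i) = ∑ i, c i • (A *ᵥ w i) := by
    rw [mulVec_sum']
    exact Finset.sum_congr rfl fun i _ => Matrix.mulVec_smul A (c i) (w i)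
  rw [hAv]
  simp only [sum_dotProduct', dotProduct_sum', smul_dotProduct,
    dotProduct_smul, smul_eq_mul, hform, mul_ite, mul_zero,
    Finset.sum_ite_eq, Finset.sum_ite_eq', Finset.mem_univ, if_true]
  exact Finset.sum_congr rfl fun i _ => by ring

end Helpers

section Ext
variable {V : Type*} {W : Type*} [Fintype V] [Fintype W] [DecidableEq V] [DecidableEq W]

lemma extend_dot (f : W → V) (hf : Function.Injective f) (x y : W → ℝ) :
    (Function.extend f x 0) ⬝ᵥ (Function.extend f y 0) = x ⬝ᵥ y := by
  unfold dotProduct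
  rw [← Finset.sum_subset (Finset.subset_univ (Finset.univ.image f))]
  · rw [Finset.sum_image (fun a _ b _ h => hf h)]
    simp [hf.extend_apply]
  · intro k _ hk
    have hnk : ¬ ∃ j, f j = k := by simpa [Finset.mem_image] using hk
    rw [Function.extend_apply' _ _ _ hnk]
    simp

lemma mulVec_extend_apply (A : Matrix V V ℝ) (f : W → V) (hf : Function.Injective f)
    (y : W → ℝ) (k : V) :
    (A *ᵥ Function.extend f y 0) k = ∑ j, A k (f j) * y j := by
  show (fun l => A k l) ⬝ᵥ (Function.extend f y 0) = _
  unfold dotProduct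
  rw [← Finset.sum_subset (Finset.subset_univ (Finset.univ.image f))]
  · rw [Finset.sum_image (fun a _ b _ h => hf h)]
    simp [hf.extend_apply]
  · intro l _ hl
    have hnl : ¬ ∃ j, f j = l := by simpa [Finset.mem_image] using hl
    rw [Function.extend_apply' _ _ _ hnl]
    simp

lemma extend_dot_mulVec (A : Matrix V V ℝ) (f : W → V) (hf : Function.Injective f)
    (x y : W → ℝ) :
    (Function.extend f x 0) ⬝ᵥ (A *ᵥ (Function.extend f y 0))
      = x ⬝ᵥ ((A.submatrix f f) *ᵥ y) := by
  unfold dotProduct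
  rw [← Finset.sum_subset (Finset.subset_univ (Finset.univ.image f))]
  · rw [Finset.sum_image (fun a _ b _ h => hf h)]
    apply Finset.sum_congr rfl
    intro j _
    rw [hf.extend_apply, mulVec_extend_apply A f hf]
    rfl
  · intro k _ hk
    have hnk : ¬ ∃ j, f j = k := by simpa [Finset.mem_image] using hk
    rw [Function.extend_apply' _ _ _ hnk]
    simp
end Ext

section Count
variable {V : Type*} {W : Type*} [Fintype V] [Fintype W] [DecidableEq V] [DecidableEq W]

/-- dot products of the eigenvector basis vectors. -/
lemma eigenvectorBasis_dot (A : Matrix V V ℝ) (hA : A.IsHermitian) (i j : V) :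
    (⇑(hA.eigenvectorBasis i) : V → ℝ) ⬝ᵥ ⇑(hA.eigenvectorBasis j)
      = if i = j then (1:ℝ) else 0 := by
  have h := orthonormal_iff_ite.mp hA.eigenvectorBasis.orthonormal i j
  rw [PiLp.inner_apply] at h
  simpa [dotProduct, RCLike.inner_apply, starRingEnd_apply, mul_comm] using h

lemma eigenvectorBasis_dot_mulVec (A : Matrix V V ℝ) (hA : A.IsHermitian) (i j : V) :
    (⇑(hA.eigenvectorBasis i) : V → ℝ) ⬝ᵥ (A *ᵥ ⇑(hA.eigenvectorBasis j))
      = if i = j then hA.eigenvalues j else 0 := by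
  rw [hA.mulVec_eigenvectorBasis]
  rw [dotProduct_smul]
  rw [eigenvectorBasis_dot A hA i j]
  simp [mul_ite]
end Count

section Count2
variable {V : Type*} {W : Type*} [Fintype V] [Fintype W] [DecidableEq V] [DecidableEq W]

lemma card_eig_lt_le (A : Matrix V V ℝ) (hA : A.IsHermitian)
    (f : W → V) (hf : Function.Injective f) (hB : (A.submatrix f f).IsHermitian) (t : ℝ) :
    (Finset.univ.filter fun j : W => t < hB.eigenvalues j).card
      ≤ (Finset.univ.filter fun k : V => t < hA.eigenvalues k).card := by
  classical
  set μ := hA.eigenvalues with hμdef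
  set ν := hB.eigenvalues with hνdef
  set u : V → (V → ℝ) := fun k => ⇑(hA.eigenvectorBasis k) with hudef
  set z : W → (V → ℝ) := fun j => Function.extend f (⇑(hB.eigenvectorBasis j)) 0 with hzdef
  have hz_dot : ∀ i j, z i ⬝ᵥ z j = if i = j then (1:ℝ) else 0 := by
    intro i j
    rw [hzdef]
    simp only
    rw [extend_dot f hf]
    exact eigenvectorBasis_dot _ hB i j
  have hz_form : ∀ i j, z i ⬝ᵥ (A *ᵥ z j) = if i = j then ν j else 0 := by
    intro i j
    rw [hzdef]
    simp only
    rw [extend_dot_mulVec A f hf]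
    exact eigenvectorBasis_dot_mulVec _ hB i j
  have hu_dot : ∀ i j, u i ⬝ᵥ u j = if i = j then (1:ℝ) else 0 :=
    eigenvectorBasis_dot A hA
  have hu_form : ∀ i j, u i ⬝ᵥ (A *ᵥ u j) = if i = j then μ j else 0 :=
    eigenvectorBasis_dot_mulVec A hA
  -- subtype families
  set zJ : {j : W // t < ν j} → (V → ℝ) := fun j => z j.1 with hzJ
  set uK : {k : V // ¬ t < μ k} → (V → ℝ) := fun k => u k.1 with huK
  have hzJ_dot : ∀ i j, zJ i ⬝ᵥ zJ j = if i = j then (1:ℝ) else 0 := by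
    intro i j
    rw [hzJ]; simp only
    rw [hz_dot]
    simp [Subtype.ext_iff]
  have hzJ_form : ∀ i j, zJ i ⬝ᵥ (A *ᵥ zJ j) = if i = j then ν j.1 else 0 := by
    intro i j
    rw [hzJ]; simp only
    rw [hz_form]
    simp [Subtype.ext_iff]
  have huK_dot : ∀ i j, uK i ⬝ᵥ uK j = if i = j then (1:ℝ) else 0 := by
    intro i j
    rw [huK]; simp only
    rw [hu_dot]
    simp [Subtype.ext_iff]
  have huK_form : ∀ i j, uK i ⬝ᵥ (A *ᵥ uK j) = if i = j then μ j.1 else 0 := by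
    intro i j
    rw [huK]; simp only
    rw [hu_form]
    simp [Subtype.ext_iff]
  set S : Submodule ℝ (V → ℝ) := Submodule.span ℝ (Set.range zJ) with hS
  set T : Submodule ℝ (V → ℝ) := Submodule.span ℝ (Set.range uK) with hT
  have hdisj : Disjoint S T := by
    rw [Submodule.disjoint_def]
    intro x hxS hxT
    obtain ⟨c, hc⟩ := Submodule.mem_span_range_iff_exists_fun ℝ |>.mp hxS
    obtain ⟨d, hd⟩ := Submodule.mem_span_range_iff_exists_fun ℝ |>.mp hxT
    by_contra hx0
    have hcne : ∃ j, c j ≠ 0 := by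
      by_contra hall
      push_neg at hall
      exact hx0 (by rw [← hc]; simp [hall])
    obtain ⟨j0, hj0⟩ := hcne
    have h1 : x ⬝ᵥ (A *ᵥ x) = ∑ j, ν j.1 * c j ^ 2 := by
      rw [← hc]; exact dot_sum_smul_form A zJ _ hzJ_form c
    have h2 : x ⬝ᵥ x = ∑ j, c j ^ 2 := by
      rw [← hc]; exact dot_sum_smul_self zJ hzJ_dot c
    have h3 : x ⬝ᵥ (A *ᵥ x) = ∑ k, μ k.1 * d k ^ 2 := by
      rw [← hd]; exact dot_sum_smul_form A uK _ huK_form d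
    have h4 : x ⬝ᵥ x = ∑ k, d k ^ 2 := by
      rw [← hd]; exact dot_sum_smul_self uK huK_dot d
    have hSlt : t * (x ⬝ᵥ x) < x ⬝ᵥ (A *ᵥ x) := by
      rw [h1, h2, Finset.mul_sum]
      apply Finset.sum_lt_sum
      · intro j _
        exact mul_le_mul_of_nonneg_right (le_of_lt j.2) (sq_nonneg _)
      · exact ⟨j0, Finset.mem_univ _, by
          have : (0:ℝ) < c j0 ^ 2 := by positivity
          exact mul_lt_mul_of_pos_right j0.2 this⟩
    have hTle : x ⬝ᵥ (A *ᵥ x) ≤ t * (x ⬝ᵥ x) := by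
      rw [h3, h4, Finset.mul_sum]
      apply Finset.sum_le_sum
      intro k _
      exact mul_le_mul_of_nonneg_right (not_lt.mp k.2) (sq_nonneg _)
    linarith
  have hSrank : Module.finrank ℝ S = Fintype.card {j : W // t < ν j} :=
    finrank_span_eq_card (linearIndependent_of_dot zJ hzJ_dot)
  have hTrank : Module.finrank ℝ T = Fintype.card {k : V // ¬ t < μ k} :=
    finrank_span_eq_card (linearIndependent_of_dot uK huK_dot)
  have hle := Submodule.finrank_add_finrank_le_of_disjoint hdisj
  rw [hSrank, hTrank, Module.finrank_fintype_fun_eq_card] at hle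
  rw [Fintype.card_subtype, Fintype.card_subtype] at hle
  have hsplit := Finset.card_filter_add_card_filter_not
    (s := (Finset.univ : Finset V)) (p := fun k => t < μ k)
  rw [Finset.card_univ] at hsplit
  omega
end Count2

lemma card_filter_comp {α β : Type*} [Fintype α] [Fintype β] [DecidableEq β] (e : α ≃ β)
    (p : β → Prop) [DecidablePred p] :
    (Finset.univ.filter fun x => p (e x)).card = (Finset.univ.filter p).card := by
  apply Finset.card_bij (fun x _ => e x)
  · intro a ha
    simp only [Finset.mem_filter, Finset.mem_univ, true_and] at ha ⊢
    exact ha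
  · intro a _ b _ h
    exact e.injective h
  · intro b hb
    simp only [Finset.mem_filter, Finset.mem_univ, true_and] at hb
    exact ⟨e.symm b, by simp [hb], by simp⟩

lemma sorted_interlace {m : ℕ} (a : Fin (m + 2) → ℝ) (b : Fin (m + 1) → ℝ)
    (ha : Monotone a) (hb : Monotone b)
    (hc : ∀ t : ℝ, (Finset.univ.filter fun j => t < b j).card
        ≤ (Finset.univ.filter fun k => t < a k).card)
    (i : Fin (m + 1)) : b i ≤ a i.succ := by
  by_contra hcon
  push_neg at hcon
  have h1 : Finset.Ici i ⊆ Finset.univ.filter fun j => a i.succ < b j := by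
    intro j hj
    rw [Finset.mem_Ici] at hj
    simp only [Finset.mem_filter, Finset.mem_univ, true_and]
    exact lt_of_lt_of_le hcon (hb hj)
  have h2 : (Finset.univ.filter fun k => a i.succ < a k) ⊆ (Finset.Iic i.succ)ᶜ := by
    intro k hk
    simp only [Finset.mem_filter, Finset.mem_univ, true_and] at hk
    simp only [Finset.mem_compl, Finset.mem_Iic]
    intro hle
    exact absurd (ha hle) (not_le.mpr hk)
  have c1 := Finset.card_le_card h1
  have c2 := Finset.card_le_card h2
  rw [Fin.card_Ici] at c1
  rw [Finset.card_compl, Fin.card_Iic] at c2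
  have c3 := hc (a i.succ)
  have hi : i.val < m + 1 := i.isLt
  have hs : (i.succ : Fin (m + 2)).val = i.val + 1 := rfl
  rw [hs] at c2
  simp only [Fintype.card_fin] at c2
  omega

lemma assembly {m : ℕ} (a : Fin (m + 2) → ℝ) (b : Fin (m + 1) → ℝ)
    (hab : ∀ i : Fin (m + 1), b i ≤ a i.succ)
    (h0 : 0 ≤ a (Fin.last (m + 1))) :
    (∑ i, if 0 < a i then a i ^ 2 else 0) ≥
      a (Fin.last (m + 1)) ^ 2 + (∑ j, if 0 < b j then b j ^ 2 else 0)
        - b (Fin.last m) ^ 2 := by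
  set P : ℝ → ℝ := fun x => if 0 < x then x ^ 2 else 0 with hP
  have Pmono : Monotone P := by
    intro x y hxy
    rw [hP]
    simp only
    split_ifs with h1 h2 h2
    · nlinarith
    · exact absurd (lt_of_lt_of_le h1 hxy) h2
    · positivity
    · exact le_refl 0
  have Ple : ∀ x : ℝ, P x ≤ x ^ 2 := by
    intro x
    rw [hP]; simp only
    split_ifs
    · exact le_refl _
    · positivity
  have Pnn : ∀ x : ℝ, 0 ≤ P x := by
    intro x
    rw [hP]; simp only
    split_ifs
    · positivity
    · exact le_refl 0
  have hPlast : P (a (Fin.last (m + 1))) = a (Fin.last (m + 1)) ^ 2 := by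
    rw [hP]; simp only
    split_ifs with h
    · rfl
    · have h' : a (Fin.last (m + 1)) = 0 := le_antisymm (not_lt.mp h) h0
      rw [h']; ring
  have e1 : (∑ i : Fin (m + 2), P (a i))
      = P (a (0 : Fin (m + 2))) + ∑ i : Fin (m + 1), P (a i.succ) :=
    Fin.sum_univ_succ _
  have e2 : (∑ i : Fin (m + 1), P (a i.succ))
      = (∑ i : Fin m, P (a i.castSucc.succ)) + P (a (Fin.last m).succ) :=
    Fin.sum_univ_castSucc _
  have e3 : (∑ j : Fin (m + 1), P (b j))
      = (∑ i : Fin m, P (b i.castSucc)) + P (b (Fin.last m)) :=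
    Fin.sum_univ_castSucc _
  have hlastsucc : (Fin.last m).succ = Fin.last (m + 1) := Fin.succ_last m
  have hsum : (∑ i : Fin m, P (b i.castSucc)) ≤ ∑ i : Fin m, P (a i.castSucc.succ) :=
    Finset.sum_le_sum fun i _ => Pmono (hab _)
  have hble : P (b (Fin.last m)) ≤ b (Fin.last m) ^ 2 := Ple _
  have h00 : 0 ≤ P (a (0 : Fin (m + 2))) := Pnn _
  show (∑ i : Fin (m + 2), P (a i)) ≥ a (Fin.last (m + 1)) ^ 2 + (∑ j : Fin (m + 1), P (b j)) - b (Fin.last m) ^ 2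
  rw [e1, e2, e3, hlastsucc, hPlast]
  linarith

lemma sum_eigenvalues_eq_trace' {V : Type*} [Fintype V] [DecidableEq V]
    (A : Matrix V V ℝ) (hA : A.IsHermitian) :
    ∑ k, hA.eigenvalues k = A.trace := by
  have h := hA.spectral_theorem
  have h2 : A.trace = (Matrix.diagonal (RCLike.ofReal ∘ hA.eigenvalues) : Matrix V V ℝ).trace := by
    conv_lhs => rw [h]
    rw [Unitary.conjStarAlgAut_apply, Matrix.trace_mul_cycle]
    have hu : (star (hA.eigenvectorUnitary : Matrix V V ℝ)) * (hA.eigenvectorUnitary : Matrix V V ℝ) = 1 :=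
      ((Unitary.mem_iff).mp hA.eigenvectorUnitary.2).1
    rw [hu, Matrix.one_mul]
  rw [h2, Matrix.trace_diagonal]
  simp

lemma eigenvalues_congr {n : Type*} [Fintype n] [DecidableEq n] {M N : Matrix n n ℝ}
    (h : M = N) (hM : M.IsHermitian) (hN : N.IsHermitian) :
    hM.eigenvalues = hN.eigenvalues := by
  subst h
  rfl

open Matrix

variable {V : Type*}

/-- For a graph `G` on `n ≥ 2` vertices and a vertex `v`,
`s⁺(G) ≥ λ₁(G)² + s⁺(G−v) − λ₁(G−v)²`. -/
theorem sPlus_ge_vertex_deleted {V : Type*} [Fintype V] [DecidableEq V]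
    (G : SimpleGraph V) (hn : 2 ≤ Fintype.card V) (v : V) :
    sPlus G ≥ (maxEig G) ^ 2 + sPlus (G.induce (↑({v}ᶜ : Finset V) : Set V))
      - (maxEig (G.induce (↑({v}ᶜ : Finset V) : Set V))) ^ 2 := by
  letI : DecidableRel G.Adj := Classical.decRel G.Adj
  letI : DecidableRel (G.induce (↑({v}ᶜ : Finset V) : Set V)).Adj :=
    Classical.decRel _
  set A : Matrix V V ℝ := G.adjMatrix ℝ with hAdef
  have hA : A.IsHermitian := adjMatrix_isHermitian G
  set f : ↥(↑({v}ᶜ : Finset V) : Set V) → V := fun w => (w : V) with hfdef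
  have hf : Function.Injective f := Subtype.val_injective
  have hsub : (G.induce (↑({v}ᶜ : Finset V) : Set V)).adjMatrix ℝ = A.submatrix f f := by
    ext a b
    simp only [hAdef, Matrix.submatrix_apply, SimpleGraph.adjMatrix_apply, SimpleGraph.induce_eq_coe_induce_top, SimpleGraph.comap_adj]
    exact if_congr Iff.rfl rfl rfl
  have hB : (A.submatrix f f).IsHermitian := hsub ▸ adjMatrix_isHermitian _
  have hμ : adjEigenvalues G = hA.eigenvalues := rfl
  have hν : adjEigenvalues (G.induce (↑({v}ᶜ : Finset V) : Set V)) = hB.eigenvalues :=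
    eigenvalues_congr hsub (adjMatrix_isHermitian _) hB
  have hmW : Fintype.card ↥(↑({v}ᶜ : Finset V) : Set V) = Fintype.card V - 1 := by
    have hcc : Fintype.card ↥(↑({v}ᶜ : Finset V) : Set V) = Fintype.card ↥({v}ᶜ : Finset V) :=
      Fintype.card_congr (Equiv.subtypeEquivRight fun x => Finset.mem_coe)
    rw [hcc, Fintype.card_coe, Finset.card_compl]
    simp
  set m : ℕ := Fintype.card V - 2 with hmdef
  have hV2 : Fintype.card V = m + 2 := by omega
  have hW2 : Fintype.card ↥(↑({v}ᶜ : Finset V) : Set V) = m + 1 := by omega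
  let eV : Fin (m + 2) ≃ V := (Fintype.equivFinOfCardEq hV2).symm
  let eW : Fin (m + 1) ≃ ↥(↑({v}ᶜ : Finset V) : Set V) := (Fintype.equivFinOfCardEq hW2).symm
  let σa := Tuple.sort (hA.eigenvalues ∘ eV)
  let σb := Tuple.sort (hB.eigenvalues ∘ eW)
  let eV' : Fin (m + 2) ≃ V := (σa : Equiv.Perm (Fin (m + 2))).trans eV
  let eW' : Fin (m + 1) ≃ ↥(↑({v}ᶜ : Finset V) : Set V) :=
    (σb : Equiv.Perm (Fin (m + 1))).trans eW
  set a : Fin (m + 2) → ℝ := fun i => hA.eigenvalues (eV' i) with hadef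
  set b : Fin (m + 1) → ℝ := fun j => hB.eigenvalues (eW' j) with hbdef
  have ha : Monotone a := Tuple.monotone_sort (hA.eigenvalues ∘ eV)
  have hb : Monotone b := Tuple.monotone_sort (hB.eigenvalues ∘ eW)
  have hcount : ∀ t : ℝ, (Finset.univ.filter fun j => t < b j).card
      ≤ (Finset.univ.filter fun k => t < a k).card := by
    intro t
    have h1 := card_filter_comp eW' (fun w => t < hB.eigenvalues w)
    have h2 := card_filter_comp eV' (fun k => t < hA.eigenvalues k)
    calc (Finset.univ.filter fun j => t < b j).card
        = (Finset.univ.filter fun w => t < hB.eigenvalues w).card := h1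
      _ ≤ (Finset.univ.filter fun k => t < hA.eigenvalues k).card :=
          card_eig_lt_le A hA f hf hB t
      _ = (Finset.univ.filter fun k => t < a k).card := h2.symm
  have hab : ∀ i : Fin (m + 1), b i ≤ a i.succ := sorted_interlace a b ha hb hcount
  have htr : ∑ k, hA.eigenvalues k = 0 := by
    rw [sum_eigenvalues_eq_trace']
    simp [hAdef, Matrix.trace, Matrix.diag]
  have hsa : ∑ i, a i = 0 := by
    rw [hadef]
    rw [Equiv.sum_comp eV' hA.eigenvalues]
    exact htr
  have h0 : 0 ≤ a (Fin.last (m + 1)) := by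
    by_contra hneg
    push_neg at hneg
    have hle2 : (∑ i, a i) ≤ (m + 2 : ℝ) * a (Fin.last (m + 1)) := by
      calc ∑ i, a i ≤ ∑ _i : Fin (m + 2), a (Fin.last (m + 1)) :=
            Finset.sum_le_sum fun i _ => ha (Fin.le_last i)
        _ = (m + 2 : ℝ) * a (Fin.last (m + 1)) := by
            rw [Finset.sum_const, Finset.card_univ, Fintype.card_fin, nsmul_eq_mul]
            push_cast
            ring
    rw [hsa] at hle2
    nlinarith [show (0:ℝ) < (m : ℝ) + 2 by positivity]
  haveI : Nonempty V := Fintype.card_pos_iff.mp (by omega)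
  haveI : Nonempty ↥(↑({v}ᶜ : Finset V) : Set V) := Fintype.card_pos_iff.mp (by omega)
  have hmaxA : maxEig G = a (Fin.last (m + 1)) := by
    apply le_antisymm
    · apply ciSup_le
      intro k
      have hk : adjEigenvalues G k = a (eV'.symm k) := by
        rw [hμ, hadef]
        exact congrArg hA.eigenvalues (eV'.apply_symm_apply k).symm
      rw [hk]
      exact ha (Fin.le_last _)
    · have hx : a (Fin.last (m + 1)) = adjEigenvalues G (eV' (Fin.last (m + 1))) := by
        rw [hμ, hadef]
      rw [hx]
      exact le_ciSup (Set.Finite.bddAbove (Set.finite_range _)) _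
  have hmaxB : maxEig (G.induce (↑({v}ᶜ : Finset V) : Set V)) = b (Fin.last m) := by
    apply le_antisymm
    · apply ciSup_le
      intro k
      have hk : adjEigenvalues (G.induce (↑({v}ᶜ : Finset V) : Set V)) k = b (eW'.symm k) := by
        rw [hν, hbdef]
        exact congrArg hB.eigenvalues (eW'.apply_symm_apply k).symm
      rw [hk]
      exact hb (Fin.le_last _)
    · have hx : b (Fin.last m) = adjEigenvalues (G.induce (↑({v}ᶜ : Finset V) : Set V))
          (eW' (Fin.last m)) := by
        rw [hν, hbdef]
      rw [hx]
      exact le_ciSup (Set.Finite.bddAbove (Set.finite_range _)) _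
  have hsPG : sPlus G = ∑ i, (if 0 < a i then a i ^ 2 else 0) := by
    rw [show sPlus G = ∑ k, (if 0 < hA.eigenvalues k then hA.eigenvalues k ^ 2 else 0) by
      rw [sPlus, hμ]]
    rw [← Equiv.sum_comp eV' (fun k => if 0 < hA.eigenvalues k then hA.eigenvalues k ^ 2 else 0)]
  have hsPH : sPlus (G.induce (↑({v}ᶜ : Finset V) : Set V))
      = ∑ j, (if 0 < b j then b j ^ 2 else 0) := by
    rw [show sPlus (G.induce (↑({v}ᶜ : Finset V) : Set V))
        = ∑ k, (if 0 < hB.eigenvalues k then hB.eigenvalues k ^ 2 else 0) by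
      rw [sPlus, hν]]
    rw [← Equiv.sum_comp eW' (fun k => if 0 < hB.eigenvalues k then hB.eigenvalues k ^ 2 else 0)]
  have hass := assembly a b hab h0
  rw [hsPG, hsPH, hmaxA, hmaxB]
  exact hass
end
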